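/- arXiv:0709.3648 — 5 statements merged into one kernel-verified Lean document; each statement's English description precedes it below -/
import Mathlib

section
/- Let h, q be positive integers and W the weight defined by W(a) = 2h − 3|a| for |a| ≤ h, W(a) = |a| − 2h for h ≤ |a| ≤ 2h, W(a) = 0 otherwise. Then the sum of W(a) over all integers a divisible by q equals q·({2h/q}² − 4{h/q}² − 4{2h/q}·0 − {2h/q} + 4{h/q}), which simplifies to 2q·‖h/q‖, where ‖x‖ denotes the distance from x to the nearest integer. -/
/-- The weight function W of the paper. -/
def Wwt (h : ℕ) (a : ℤ) : ℤ :=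
  if |a| ≤ (h : ℤ) then 2*h - 3*|a| else if |a| ≤ 2*(h:ℤ) then |a| - 2*h else 0

/-- Distance from a real number to the nearest integer. -/
noncomputable def distInt (x : ℝ) : ℝ := ⨅ n : ℤ, |x - (n : ℝ)|

lemma Wwt_neg (h : ℕ) (a : ℤ) : Wwt h (-a) = Wwt h a := by simp [Wwt]

lemma Wwt_eq_zero (h : ℕ) (a : ℤ) (ha : 2*(h:ℤ) < |a|) : Wwt h a = 0 := by
  unfold Wwt
  rw [if_neg (by omega), if_neg (by omega)]

lemma sum_lin (c d a : ℤ) : ∀ n : ℤ, a - 1 ≤ n →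
    2 * ∑ k ∈ Finset.Icc a n, (c + d*k) = 2*(n - a + 1)*c + d*(n*(n+1) - (a-1)*a) := by
  refine Int.le_induction ?_ ?_
  · rw [Finset.Icc_eq_empty (by omega)]
    simp only [Finset.sum_empty, mul_zero]
    ring
  · intro n hn ih
    rw [show Finset.Icc a (n+1) = insert (n+1) (Finset.Icc a n) by
          ext x; simp [Finset.mem_Icc, Finset.mem_insert]; omega,
        Finset.sum_insert (by simp)]
    linear_combination ih

lemma distInt_eq (x : ℝ) (h0 : 0 ≤ x) (h1 : x ≤ 1) : distInt x = min x (1-x) := by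
  unfold distInt
  have hbdd : BddBelow (Set.range fun n : ℤ => |x - (n:ℝ)|) := by
    refine ⟨0, ?_⟩
    rintro y ⟨n, rfl⟩
    exact abs_nonneg _
  apply le_antisymm
  · apply le_min
    · calc (⨅ n : ℤ, |x - (n:ℝ)|) ≤ |x - ((0:ℤ):ℝ)| := ciInf_le hbdd 0
        _ = x := by simp [abs_of_nonneg h0]
    · calc (⨅ n : ℤ, |x - (n:ℝ)|) ≤ |x - ((1:ℤ):ℝ)| := ciInf_le hbdd 1
        _ = 1 - x := by rw [abs_of_nonpos (by push_cast; linarith)]; push_cast; ring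
  · apply le_ciInf
    intro n
    rcases le_or_gt (n:ℤ) 0 with hn | hn
    · have : (n:ℝ) ≤ 0 := by exact_mod_cast hn
      have := neg_abs_le (x - (n:ℝ))
      have := le_abs_self (x - (n:ℝ))
      simp only [min_le_iff]
      left; linarith
    · have : (1:ℝ) ≤ (n:ℝ) := by exact_mod_cast hn
      have := neg_abs_le (x - (n:ℝ))
      simp only [min_le_iff]
      right; linarith

lemma distInt_int_add (x : ℝ) (m : ℤ) : distInt ((m:ℝ) + x) = distInt x := by
  have hr : Set.range (fun n : ℤ => |(m:ℝ) + x - (n:ℝ)|) = Set.range (fun n : ℤ => |x - (n:ℝ)|) := by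
    ext y
    constructor
    · rintro ⟨n, rfl⟩
      exact ⟨n - m, by push_cast; ring_nf⟩
    · rintro ⟨n, rfl⟩
      exact ⟨n + m, by push_cast; ring_nf⟩
  rw [distInt, distInt, iInf, iInf, hr]

lemma key (h q : ℕ) (hh : 0 < h) (hq : 0 < q) :
    ∑ k ∈ Finset.Icc (-(2*(h:ℤ))) (2*(h:ℤ)), Wwt h ((q:ℤ)*k)
      = 2 * min ((h:ℤ) % q) ((q:ℤ) - (h:ℤ) % q) := by
  set B : ℤ := 2*(h:ℤ) with hB
  set m : ℤ := (h:ℤ) / q with hm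
  set r : ℤ := (h:ℤ) % q with hr
  have hqz : (0:ℤ) < q := by exact_mod_cast hq
  have hhz : (0:ℤ) < h := by exact_mod_cast hh
  have hdm : (h:ℤ) = q * m + r := by rw [hm, hr]; exact (Int.mul_ediv_add_emod (h:ℤ) q).symm
  have hr0 : 0 ≤ r := Int.emod_nonneg _ (by omega)
  have hr1 : r < q := Int.emod_lt_of_pos _ hqz
  have hm0 : 0 ≤ m := Int.ediv_nonneg (by omega) (by omega)
  have hmq : m ≤ q * m := le_mul_of_one_le_left hm0 (by omega)
  have hmul : ∀ x y : ℤ, x ≤ y → (q:ℤ)*x ≤ q*y :=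
    fun x y hxy => mul_le_mul_of_nonneg_left hxy (by omega)
  have hsplit : Finset.Icc (-B) B = Finset.Icc (-B) (-1) ∪ Finset.Icc 0 B := by
    ext x; simp only [Finset.mem_Icc, Finset.mem_union]; omega
  have hdisj : Disjoint (Finset.Icc (-B) (-1)) (Finset.Icc (0:ℤ) B) := by
    simp only [Finset.disjoint_left, Finset.mem_Icc]
    omega
  have hneg : ∑ k ∈ Finset.Icc (-B) (-1), Wwt h ((q:ℤ)*k)
      = ∑ k ∈ Finset.Icc (1:ℤ) B, Wwt h ((q:ℤ)*k) := by
    apply Finset.sum_nbij' (i := fun k => -k) (j := fun k => -k)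
    · intro a ha; simp only [Finset.mem_Icc] at *; omega
    · intro a ha; simp only [Finset.mem_Icc] at *; omega
    · intro a _; ring
    · intro a _; ring
    · intro a _; rw [mul_neg, Wwt_neg]
  have h0B : Finset.Icc (0:ℤ) B = insert 0 (Finset.Icc 1 B) := by
    ext x; simp only [Finset.mem_Icc, Finset.mem_insert]; omega
  have hW0 : Wwt h ((q:ℤ)*0) = 2*(h:ℤ) := by
    rw [mul_zero]
    simp [Wwt, hhz.le]
  rw [hsplit, Finset.sum_union hdisj, hneg, h0B, Finset.sum_insert (by simp), hW0]
  rcases lt_or_ge (2*r) (q:ℤ) with hc | hc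
  · -- case A : M = 2m
    have key1 : ∀ k ∈ Finset.Icc (1:ℤ) B, Wwt h ((q:ℤ)*k)
        = (if k ≤ m then (2*(h:ℤ) + (-(3*(q:ℤ)))*k) else 0)
          + (if m+1 ≤ k ∧ k ≤ 2*m then (-(2*(h:ℤ)) + (q:ℤ)*k) else 0) := by
      intro k hk
      simp only [Finset.mem_Icc] at hk
      have habs : |(q:ℤ)*k| = q*k := abs_of_nonneg (mul_nonneg (by omega) (by omega))
      unfold Wwt
      rw [habs]
      rcases le_or_gt k m with h1 | h1
      · have f1 : (q:ℤ)*k ≤ q*m := hmul k m h1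
        rw [if_pos (by omega), if_pos h1, if_neg (by omega)]
        ring
      · have f2 : (q:ℤ)*m + q ≤ q*k := by
          have := hmul (m+1) k h1
          linarith
        rcases le_or_gt k (2*m) with h2 | h2
        · have f3 : (q:ℤ)*k ≤ 2*(q*m) := by
            have := hmul k (2*m) h2
            linarith
          rw [if_neg (by omega), if_pos (by omega), if_neg (by omega), if_pos (by omega)]
          ring
        · have f4 : 2*(q*m) + q ≤ q*k := by
            have := hmul (2*m+1) k h2
            linarith
          rw [if_neg (by omega), if_neg (by omega), if_neg (by omega), if_neg (by omega)]
          norm_num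
    rw [Finset.sum_congr rfl key1]
    rw [Finset.sum_add_distrib]
    have e1 : ∑ k ∈ Finset.Icc (1:ℤ) B, (if k ≤ m then (2*(h:ℤ) + (-(3*(q:ℤ)))*k) else 0)
        = ∑ k ∈ Finset.Icc (1:ℤ) m, (2*(h:ℤ) + (-(3*(q:ℤ)))*k) := by
      rw [← Finset.sum_filter]
      congr 1
      ext x; simp only [Finset.mem_filter, Finset.mem_Icc]; omega
    have e2 : ∑ k ∈ Finset.Icc (1:ℤ) B, (if m+1 ≤ k ∧ k ≤ 2*m then (-(2*(h:ℤ)) + (q:ℤ)*k) else 0)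
        = ∑ k ∈ Finset.Icc (m+1) (2*m), (-(2*(h:ℤ)) + (q:ℤ)*k) := by
      rw [← Finset.sum_filter]
      congr 1
      ext x; simp only [Finset.mem_filter, Finset.mem_Icc]; omega
    rw [e1, e2, min_eq_left (by omega)]
    have g1 := sum_lin (2*(h:ℤ)) (-(3*(q:ℤ))) 1 m (by omega)
    have g2 := sum_lin (-(2*(h:ℤ))) (q:ℤ) (m+1) (2*m) (by omega)
    linear_combination g1 + g2 + 2*hdm
  · -- case B : M = 2m+1
    have key1 : ∀ k ∈ Finset.Icc (1:ℤ) B, Wwt h ((q:ℤ)*k)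
        = (if k ≤ m then (2*(h:ℤ) + (-(3*(q:ℤ)))*k) else 0)
          + (if m+1 ≤ k ∧ k ≤ 2*m+1 then (-(2*(h:ℤ)) + (q:ℤ)*k) else 0) := by
      intro k hk
      simp only [Finset.mem_Icc] at hk
      have habs : |(q:ℤ)*k| = q*k := abs_of_nonneg (mul_nonneg (by omega) (by omega))
      unfold Wwt
      rw [habs]
      rcases le_or_gt k m with h1 | h1
      · have f1 : (q:ℤ)*k ≤ q*m := hmul k m h1
        rw [if_pos (by omega), if_pos h1, if_neg (by omega)]
        ring
      · have f2 : (q:ℤ)*m + q ≤ q*k := by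
          have := hmul (m+1) k h1
          linarith
        rcases le_or_gt k (2*m+1) with h2 | h2
        · have f3 : (q:ℤ)*k ≤ 2*(q*m) + q := by
            have := hmul k (2*m+1) h2
            linarith
          rw [if_neg (by omega), if_pos (by omega), if_neg (by omega), if_pos (by omega)]
          ring
        · have f4 : 2*(q*m) + 2*q ≤ q*k := by
            have := hmul (2*m+2) k (by omega)
            linarith
          rw [if_neg (by omega), if_neg (by omega), if_neg (by omega), if_neg (by omega)]
          norm_num
    rw [Finset.sum_congr rfl key1]
    rw [Finset.sum_add_distrib]
    have e1 : ∑ k ∈ Finset.Icc (1:ℤ) B, (if k ≤ m then (2*(h:ℤ) + (-(3*(q:ℤ)))*k) else 0)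
        = ∑ k ∈ Finset.Icc (1:ℤ) m, (2*(h:ℤ) + (-(3*(q:ℤ)))*k) := by
      rw [← Finset.sum_filter]
      congr 1
      ext x; simp only [Finset.mem_filter, Finset.mem_Icc]; omega
    have e2 : ∑ k ∈ Finset.Icc (1:ℤ) B, (if m+1 ≤ k ∧ k ≤ 2*m+1 then (-(2*(h:ℤ)) + (q:ℤ)*k) else 0)
        = ∑ k ∈ Finset.Icc (m+1) (2*m+1), (-(2*(h:ℤ)) + (q:ℤ)*k) := by
      rw [← Finset.sum_filter]
      congr 1
      ext x; simp only [Finset.mem_filter, Finset.mem_Icc]; omega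
    rw [e1, e2, min_eq_right (by omega)]
    have g1 := sum_lin (2*(h:ℤ)) (-(3*(q:ℤ))) 1 m (by omega)
    have g2 := sum_lin (-(2*(h:ℤ))) (q:ℤ) (m+1) (2*m+1) (by omega)
    linear_combination g1 + g2 - 2*hdm

lemma fract_div (q : ℕ) (hq : 0 < q) (N M s : ℤ) (hN : N = q*M + s) (h0 : 0 ≤ s) (h1 : s < q) :
    Int.fract ((N:ℝ)/q) = (s:ℝ)/q := by
  have hq0 : (0:ℝ) < q := by exact_mod_cast hq
  have hx : (N:ℝ)/q = (M:ℝ) + (s:ℝ)/q := by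
    field_simp
    push_cast [hN]
    ring
  rw [hx, Int.fract_intCast_add, Int.fract_eq_self.mpr
    ⟨div_nonneg (by exact_mod_cast h0) hq0.le, by rw [div_lt_one hq0]; exact_mod_cast h1⟩]

theorem sum_W_multiples (h q : ℕ) (hh : 0 < h) (hq : 0 < q) :
    (∑' a : ℤ, (if (q : ℤ) ∣ a then (Wwt h a : ℝ) else 0))
      = (q : ℝ) * (Int.fract ((2*h : ℝ)/q)^2 - 4 * Int.fract ((h : ℝ)/q)^2
          - Int.fract ((2*h : ℝ)/q) + 4 * Int.fract ((h : ℝ)/q)) ∧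
    (∑' a : ℤ, (if (q : ℤ) ∣ a then (Wwt h a : ℝ) else 0))
      = 2 * (q : ℝ) * distInt ((h : ℝ)/q) := by
  have hqz : (0:ℤ) < q := by exact_mod_cast hq
  have hhz : (0:ℤ) < h := by exact_mod_cast hh
  have hq0 : (0:ℝ) < q := by exact_mod_cast hq
  have hB0 : (0:ℤ) ≤ 2*(h:ℤ) := by omega
  have hqB : 2*(h:ℤ) ≤ q*(2*(h:ℤ)) := le_mul_of_one_le_left hB0 (by omega)
  set m : ℤ := (h:ℤ) / q with hm
  set r : ℤ := (h:ℤ) % q with hr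
  have hdm : (h:ℤ) = q * m + r := by rw [hm, hr]; exact (Int.mul_ediv_add_emod (h:ℤ) q).symm
  have hr0 : 0 ≤ r := Int.emod_nonneg _ (by omega)
  have hr1 : r < q := Int.emod_lt_of_pos _ hqz
  -- the tsum equals the integer finite sum
  have hts : (∑' a : ℤ, (if (q : ℤ) ∣ a then (Wwt h a : ℝ) else 0))
      = ((∑ k ∈ Finset.Icc (-(2*(h:ℤ))) (2*(h:ℤ)), Wwt h ((q:ℤ)*k) : ℤ) : ℝ) := by
    rw [tsum_eq_sum (s := Finset.Icc (-(q*(2*(h:ℤ)))) (q*(2*(h:ℤ))))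
      (by
        intro a ha
        simp only [Finset.mem_Icc, not_and_or, not_le] at ha
        have habs : 2*(h:ℤ) < |a| := by
          rcases ha with ha | ha
          · calc 2*(h:ℤ) ≤ q*(2*(h:ℤ)) := hqB
              _ < -a := by linarith
              _ ≤ |a| := by rw [← abs_neg]; exact le_abs_self _
          · calc 2*(h:ℤ) ≤ q*(2*(h:ℤ)) := hqB
              _ < a := ha
              _ ≤ |a| := le_abs_self a
        split_ifs with hd
        · rw [Wwt_eq_zero h a habs]; norm_num
        · rfl)]
    rw [← Finset.sum_filter]
    have himg : (Finset.Icc (-(q*(2*(h:ℤ)))) (q*(2*(h:ℤ)))).filter (fun a => (q:ℤ) ∣ a)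
        = (Finset.Icc (-(2*(h:ℤ))) (2*(h:ℤ))).image (fun k => (q:ℤ)*k) := by
      ext a
      simp only [Finset.mem_filter, Finset.mem_Icc, Finset.mem_image]
      constructor
      · rintro ⟨⟨hl, hr'⟩, k, rfl⟩
        refine ⟨k, ⟨?_, ?_⟩, rfl⟩
        · nlinarith
        · nlinarith
      · rintro ⟨k, ⟨hl, hr'⟩, rfl⟩
        exact ⟨⟨by nlinarith, by nlinarith⟩, ⟨k, rfl⟩⟩
    rw [himg, Finset.sum_image (by
      intro x _ y _ hxy
      exact mul_left_cancel₀ (by omega) hxy)]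
    rw [Int.cast_sum]
  have hkey := key h q hh hq
  have hα : Int.fract ((h:ℝ)/q) = (r:ℝ)/q := fract_div q hq (h:ℤ) m r hdm hr0 hr1
  have hdmR : (h:ℝ) = q*m + r := by exact_mod_cast hdm
  have hx : (h:ℝ)/q = (m:ℝ) + (r:ℝ)/q := by
    rw [hdmR, add_div, mul_div_cancel_left₀ _ (ne_of_gt hq0)]
  constructor
  · rw [hts, hkey]
    rcases lt_or_ge (2*r) (q:ℤ) with hc | hc
    · have hβ : Int.fract ((2*(h:ℝ))/q) = (2*(r:ℝ))/q := by
        have := fract_div q hq (2*(h:ℤ)) (2*m) (2*r) (by linarith [hdm]) (by omega) (by omega)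
        push_cast at this ⊢
        exact this
      rw [min_eq_left (by omega), hβ, hα]
      push_cast
      field_simp
      ring
    · have hβ : Int.fract ((2*(h:ℝ))/q) = (2*(r:ℝ) - q)/q := by
        have := fract_div q hq (2*(h:ℤ)) (2*m+1) (2*r - q) (by linarith [hdm]) (by omega) (by omega)
        push_cast at this ⊢
        exact this
      rw [min_eq_right (by omega), hβ, hα]
      push_cast
      field_simp
      ring
  · rw [hts, hkey, hx, distInt_int_add, distInt_eq _
      (div_nonneg (by exact_mod_cast hr0) hq0.le)
      (by rw [div_le_one hq0]; exact_mod_cast hr1.le)]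
    rcases lt_or_ge (2*r) (q:ℤ) with hc | hc
    · rw [min_eq_left (by omega), min_eq_left (by
        rw [le_sub_iff_add_le, ← add_div, div_le_one hq0]
        exact_mod_cast (by omega : r + r ≤ (q:ℤ)))]
      push_cast
      field_simp
      ring
    · rw [min_eq_right (by omega), min_eq_right (by
        rw [sub_le_iff_le_add, ← add_div, le_div_iff₀ hq0, one_mul]
        exact_mod_cast (by omega : (q:ℤ) ≤ r + r))]
      push_cast
      field_simp
      ring
end

section
/- Let h be a positive integer, β a real number with sin(πβ) ≠ 0, and W the weight defined by W(a) = 2h − 3|a| for |a| ≤ h, W(a) = |a| − 2h for h ≤ |a| ≤ 2h, W(a) = 0 otherwise. Then the sum over integers a with |a| ≤ 2h of W(a)·e(aβ) equals 4 sin⁴(πhβ)/sin²(πβ), where e(θ) = exp(2πiθ). -/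
def dd (h : ℕ) (k : ℤ) : ℤ :=
  if 0 ≤ k ∧ k < 2*(h:ℤ) then (if k < (h:ℤ) then -1 else 1) else 0

lemma sum_Ico_eq (l u : ℕ) (f : ℕ → ℤ) (c : ℤ)
    (H : ∀ n, l ≤ n → n < u → f n = c) :
    ∑ n ∈ Finset.Ico l u, f n = ((u - l : ℕ) : ℤ) * c := by
  rw [Finset.sum_congr rfl fun n hn => H n (Finset.mem_Ico.1 hn).1 (Finset.mem_Ico.1 hn).2,
    Finset.sum_const, Nat.card_Ico, nsmul_eq_mul]

lemma core_nonneg (h : ℕ) (a : ℤ) (ha : 0 ≤ a) :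
    Wwt h a = ∑ n ∈ Finset.range (2*h), dd h n * dd h (n + a) := by
  set f : ℕ → ℤ := fun n => dd h n * dd h (n + a) with hf
  obtain ⟨b, rfl⟩ : ∃ b : ℕ, (b : ℤ) = a := ⟨a.toNat, Int.toNat_of_nonneg ha⟩
  rw [Finset.range_eq_Ico]
  rcases le_or_gt (b : ℤ) (h : ℤ) with hbh | hbh
  · -- 0 ≤ b ≤ h
    rw [← Finset.sum_Ico_consecutive f (show 0 ≤ h - b by omega) (show h - b ≤ 2*h by omega),
        ← Finset.sum_Ico_consecutive f (show h - b ≤ h by omega) (show h ≤ 2*h by omega),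
        ← Finset.sum_Ico_consecutive f (show h ≤ 2*h - b by omega) (show 2*h - b ≤ 2*h by omega)]
    rw [sum_Ico_eq 0 (h-b) f 1 (by intro n h1 h2; simp only [hf, dd]; split_ifs <;> first | (exfalso; omega) | decide),
        sum_Ico_eq (h-b) h f (-1) (by intro n h1 h2; simp only [hf, dd]; split_ifs <;> first | (exfalso; omega) | decide),
        sum_Ico_eq h (2*h-b) f 1 (by intro n h1 h2; simp only [hf, dd]; split_ifs <;> first | (exfalso; omega) | decide),
        sum_Ico_eq (2*h-b) (2*h) f 0 (by intro n h1 h2; simp only [hf, dd]; split_ifs <;> first | (exfalso; omega) | decide)]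
    simp only [Wwt]
    rw [if_pos (by rw [abs_of_nonneg ha]; omega), abs_of_nonneg ha]
    omega
  · rcases le_or_gt (b : ℤ) (2*(h:ℤ)) with hb2 | hb2
    · -- h < b ≤ 2h
      rw [← Finset.sum_Ico_consecutive f (show 0 ≤ 2*h - b by omega) (show 2*h - b ≤ 2*h by omega),
          ← Finset.sum_Ico_consecutive f (show 2*h - b ≤ h by omega) (show h ≤ 2*h by omega)]
      rw [sum_Ico_eq 0 (2*h-b) f (-1) (by intro n h1 h2; simp only [hf, dd]; split_ifs <;> first | (exfalso; omega) | decide),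
          sum_Ico_eq (2*h-b) h f 0 (by intro n h1 h2; simp only [hf, dd]; split_ifs <;> first | (exfalso; omega) | decide),
          sum_Ico_eq h (2*h) f 0 (by intro n h1 h2; simp only [hf, dd]; split_ifs <;> first | (exfalso; omega) | decide)]
      simp only [Wwt]
      rw [if_neg (by rw [abs_of_nonneg ha]; omega), if_pos (by rw [abs_of_nonneg ha]; omega),
        abs_of_nonneg ha]
      omega
    · -- b > 2h
      rw [sum_Ico_eq 0 (2*h) f 0 (by intro n h1 h2; simp only [hf, dd]; split_ifs <;> first | (exfalso; omega) | decide)]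
      simp only [Wwt]
      rw [if_neg (by rw [abs_of_nonneg ha]; omega), if_neg (by rw [abs_of_nonneg ha]; omega)]
      omega

lemma dd_reflect (h : ℕ) (k : ℤ) : dd h (2*(h:ℤ) - 1 - k) = - dd h k := by
  simp only [dd]; split_ifs <;> first | (exfalso; omega) | decide

lemma core (h : ℕ) (a : ℤ) :
    Wwt h a = ∑ n ∈ Finset.range (2*h), dd h n * dd h (n + a) := by
  rcases le_or_gt 0 a with ha | ha
  · exact core_nonneg h a ha
  · have h1 : Wwt h a = Wwt h (-a) := by simp [Wwt, abs_neg]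
    rw [h1, core_nonneg h (-a) (by omega)]
    rw [← Finset.sum_range_reflect]
    refine Finset.sum_congr rfl fun j hj => ?_
    have hj' : j < 2*h := Finset.mem_range.1 hj
    have hc : ((2*h - 1 - j : ℕ) : ℤ) = 2*(h:ℤ) - 1 - j := by omega
    rw [hc, dd_reflect, show (2*(h:ℤ) - 1 - j) + -a = 2*(h:ℤ) - 1 - (j + a) by ring, dd_reflect]
    ring

lemma Sval (h : ℕ) (z : ℂ) (hz0 : z ≠ 0) :
    ∑ a ∈ Finset.Icc (-(2*(h:ℤ))) (2*(h:ℤ)), (Wwt h a : ℂ) * z^a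
      = (∑ n ∈ Finset.range (2*h), (dd h n : ℂ) * z^(-(n:ℤ))) *
        (∑ k ∈ Finset.range (2*h), (dd h k : ℂ) * z^((k:ℕ) : ℤ)) := by
  have key : ∀ n ∈ Finset.range (2*h),
      ∑ a ∈ Finset.Icc (-(2*(h:ℤ))) (2*(h:ℤ)), (dd h (n + a) : ℂ) * z^((n:ℤ) + a)
      = ∑ k ∈ Finset.range (2*h), (dd h k : ℂ) * z^((k:ℕ) : ℤ) := by
    intro n hn
    have hn' : n < 2*h := Finset.mem_range.1 hn
    have hmap : Finset.Icc ((n:ℤ) + -(2*(h:ℤ))) ((n:ℤ) + 2*(h:ℤ))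
        = Finset.map (addLeftEmbedding (n:ℤ)) (Finset.Icc (-(2*(h:ℤ))) (2*(h:ℤ))) :=
      (Finset.map_add_left_Icc _ _ _).symm
    have e1 : ∑ a ∈ Finset.Icc (-(2*(h:ℤ))) (2*(h:ℤ)), (dd h (n + a) : ℂ) * z^((n:ℤ) + a)
        = ∑ m ∈ Finset.Icc ((n:ℤ) + -(2*(h:ℤ))) ((n:ℤ) + 2*(h:ℤ)), (dd h m : ℂ) * z^m := by
      rw [hmap, Finset.sum_map]
      rfl
    rw [e1]
    have e2 : ∑ m ∈ Finset.Icc (0:ℤ) (2*(h:ℤ) - 1), (dd h m : ℂ) * z^m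
        = ∑ m ∈ Finset.Icc ((n:ℤ) + -(2*(h:ℤ))) ((n:ℤ) + 2*(h:ℤ)), (dd h m : ℂ) * z^m := by
      refine Finset.sum_subset (fun m hm => ?_) (fun m hm hm' => ?_)
      · simp only [Finset.mem_Icc] at hm ⊢; omega
      · simp only [Finset.mem_Icc] at hm hm'
        have : dd h m = 0 := by simp only [dd]; split_ifs <;> first | (exfalso; omega) | rfl
        rw [this]; push_cast; ring
    rw [← e2]
    refine Finset.sum_nbij' (i := fun m => m.toNat) (j := fun k => (k : ℤ)) ?_ ?_ ?_ ?_ ?_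
      <;> intro m hm <;>
      simp only [Finset.mem_Icc, Finset.mem_range] at hm ⊢
    · omega
    · omega
    · omega
    · omega
    · rw [Int.toNat_of_nonneg hm.1]
  calc ∑ a ∈ Finset.Icc (-(2*(h:ℤ))) (2*(h:ℤ)), (Wwt h a : ℂ) * z^a
      = ∑ a ∈ Finset.Icc (-(2*(h:ℤ))) (2*(h:ℤ)), ∑ n ∈ Finset.range (2*h),
          ((dd h n : ℂ) * z^(-(n:ℤ))) * ((dd h (n+a) : ℂ) * z^((n:ℤ) + a)) := by
        refine Finset.sum_congr rfl fun a _ => ?_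
        rw [core]
        push_cast
        rw [Finset.sum_mul]
        refine Finset.sum_congr rfl fun n _ => ?_
        have hzz : z ^ a = z ^ (-(n:ℤ)) * z ^ ((n:ℤ) + a) := by
          rw [← zpow_add₀ hz0]; congr 1; ring
        rw [hzz]; ring
    _ = ∑ n ∈ Finset.range (2*h), ((dd h n : ℂ) * z^(-(n:ℤ))) *
          ∑ a ∈ Finset.Icc (-(2*(h:ℤ))) (2*(h:ℤ)), (dd h (n+a) : ℂ) * z^((n:ℤ) + a) := by
        rw [Finset.sum_comm]
        exact Finset.sum_congr rfl fun n _ => (Finset.mul_sum _ _ _).symm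
    _ = ∑ n ∈ Finset.range (2*h), ((dd h n : ℂ) * z^(-(n:ℤ))) *
          (∑ k ∈ Finset.range (2*h), (dd h k : ℂ) * z^((k:ℕ) : ℤ)) :=
        Finset.sum_congr rfl fun n hn => by rw [key n hn]
    _ = _ := (Finset.sum_mul _ _ _).symm
  
lemma Tval (h : ℕ) (z : ℂ) (hz1 : z ≠ 1) :
    ∑ k ∈ Finset.range (2*h), (dd h k : ℂ) * z^((k:ℕ) : ℤ) = (z^h - 1)^2 / (z - 1) := by
  have : ∀ k : ℕ, z^((k:ℕ):ℤ) = z^k := fun k => zpow_natCast z k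
  simp_rw [this]
  rw [show 2*h = h + h by ring, Finset.sum_range_add]
  have e1 : ∀ k ∈ Finset.range h, (dd h (k:ℤ) : ℂ) * z^k = -(z^k) := by
    intro k hk
    have hk' : k < h := Finset.mem_range.1 hk
    have : dd h (k:ℤ) = -1 := by
      simp only [dd]; split_ifs <;> first | (exfalso; omega) | rfl
    rw [this]; push_cast; ring
  have e2 : ∀ k ∈ Finset.range h, (dd h ((h+k : ℕ):ℤ) : ℂ) * z^(h+k) = z^h * z^k := by
    intro k hk
    have hk' : k < h := Finset.mem_range.1 hk
    have : dd h ((h+k:ℕ):ℤ) = 1 := by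
      simp only [dd]; split_ifs <;> first | (exfalso; omega) | rfl
    rw [this, pow_add]; push_cast; ring
  rw [Finset.sum_congr rfl e1, Finset.sum_congr rfl e2, Finset.sum_neg_distrib,
    ← Finset.mul_sum, geom_sum_eq hz1]
  field_simp
  ring

open Real in
theorem sum_W_exp (h : ℕ) (hh : 0 < h) (β : ℝ) (hβ : Real.sin (π * β) ≠ 0) :
    ∑ a ∈ Finset.Icc (-(2*(h:ℤ))) (2*(h:ℤ)),
        (Wwt h a : ℂ) * Complex.exp (2 * π * Complex.I * (a : ℂ) * (β : ℂ))
      = ((4 * Real.sin (π * h * β)^4 / Real.sin (π * β)^2 : ℝ) : ℂ) := by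
  set s : ℂ := Complex.exp ((π:ℂ) * β * Complex.I) with hs_def
  set z : ℂ := Complex.exp (2 * (π:ℂ) * Complex.I * β) with hz_def
  have hs0 : s ≠ 0 := Complex.exp_ne_zero _
  have hz0 : z ≠ 0 := Complex.exp_ne_zero _
  have hzs : z = s ^ 2 := by
    rw [hs_def, hz_def, ← Complex.exp_nat_mul]
    congr 1; push_cast; ring
  have hz1 : z ≠ 1 := by
    intro h1
    rw [hz_def, Complex.exp_eq_one_iff] at h1
    obtain ⟨n, hn⟩ := h1
    have hne : (2 * (π:ℂ) * Complex.I) ≠ 0 := by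
      simp [Real.pi_ne_zero, Complex.I_ne_zero, Complex.ofReal_ne_zero]
    have hβn : (β : ℂ) = (n : ℂ) := by
      apply mul_left_cancel₀ hne
      rw [hn]; ring
    have hβn' : β = (n : ℝ) := by exact_mod_cast hβn
    rw [hβn', mul_comm] at hβ
    exact hβ (Real.sin_int_mul_pi n)
  have hs2 : s ^ 2 ≠ 1 := hzs ▸ hz1
  have hz1' : z⁻¹ ≠ 1 := by
    rw [ne_eq, inv_eq_one]; exact hz1
  have hterm : ∀ a : ℤ, Complex.exp (2 * (π:ℂ) * Complex.I * (a : ℂ) * (β : ℂ)) = z ^ a := by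
    intro a
    rw [show (2 * (π:ℂ) * Complex.I * (a : ℂ) * (β : ℂ))
        = (a : ℤ) * (2 * (π:ℂ) * Complex.I * β) by push_cast; ring,
      Complex.exp_int_mul, ← hz_def]
  rw [Finset.sum_congr rfl fun a _ => by rw [hterm a]]
  rw [Sval h z hz0]
  have hU : (∑ n ∈ Finset.range (2*h), (dd h n : ℂ) * z^(-(n:ℤ)))
      = ((z⁻¹)^h - 1)^2 / (z⁻¹ - 1) := by
    rw [← Tval h z⁻¹ hz1']
    refine Finset.sum_congr rfl fun n _ => ?_
    rw [zpow_neg, ← inv_zpow]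
  rw [hU, Tval h z hz1]
  -- exponential expressions for the sines
  have es : Complex.exp (-((π:ℂ) * β) * Complex.I) = s⁻¹ := by
    rw [hs_def, ← Complex.exp_neg]; congr 1; ring
  have eu : Complex.exp ((π:ℂ) * (h:ℂ) * β * Complex.I) = s ^ h := by
    rw [hs_def, ← Complex.exp_nat_mul]; congr 1; push_cast; ring
  have eui : Complex.exp (-((π:ℂ) * (h:ℂ) * β) * Complex.I) = (s ^ h)⁻¹ := by
    rw [← eu, ← Complex.exp_neg]; congr 1; ring
  have hsin1 : ((Real.sin (π * β) : ℝ) : ℂ) = (s⁻¹ - s) * Complex.I / 2 := by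
    rw [Complex.ofReal_sin, Complex.sin]
    push_cast
    rw [es, ← hs_def]
  have hsin2 : ((Real.sin (π * h * β) : ℝ) : ℂ) = ((s^h)⁻¹ - s^h) * Complex.I / 2 := by
    rw [Complex.ofReal_sin, Complex.sin]
    push_cast
    rw [eui, eu]
  push_cast [hsin1, hsin2]
  have hzh : z ^ h = (s^h) ^ 2 := by rw [hzs, ← pow_mul, mul_comm, pow_mul]
  set u : ℂ := s ^ h with hu_def
  have hu0 : u ≠ 0 := pow_ne_zero _ hs0
  have h4 : ((u⁻¹ - u) * Complex.I / 2)^4 = (u⁻¹ - u)^4 / 16 := by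
    rw [div_pow, mul_pow, Complex.I_pow_four]; ring
  have h2 : ((s⁻¹ - s) * Complex.I / 2)^2 = -((s⁻¹ - s)^2 / 4) := by
    rw [div_pow, mul_pow, Complex.I_sq]; ring
  rw [inv_pow, hzh, hzs, h4, h2]
  have h1s : (1 : ℂ) - s^2 ≠ 0 := sub_ne_zero.2 (Ne.symm hs2)
  have A1 : ((u^2)⁻¹ : ℂ) - 1 = (1 - u^2)/u^2 := by field_simp
  have A2 : ((s^2)⁻¹ : ℂ) - 1 = (1 - s^2)/s^2 := by field_simp
  have A3 : (u⁻¹ : ℂ) - u = (1 - u^2)/u := by field_simp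
  have A4 : (s⁻¹ : ℂ) - s = (1 - s^2)/s := by field_simp
  rw [A1, A2, A3, A4]
  rw [div_pow, div_pow, div_pow]
  have hs21 : s^2 - 1 ≠ 0 := sub_ne_zero.2 hs2
  field_simp
  ring
end

section
/- With W as above (h a positive integer), for every positive integer ℓ and every real α, the sum over all integers b of W(ℓb)·e(bα) is a nonnegative real number. -/
namespace WwtAux

open Finset

lemma Wwt_eq_max (h : ℕ) (a : ℤ) :
    Wwt h a = 4 * max ((h:ℤ) - |a|) 0 - max (2*(h:ℤ) - |a|) 0 := by
  have h0 : 0 ≤ |a| := abs_nonneg a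
  rw [Wwt, max_def, max_def]
  split_ifs <;> omega

lemma count_eq (H : ℕ) (a : ℤ) :
    (∑ n ∈ Finset.range H, if 0 ≤ (n:ℤ) + a ∧ (n:ℤ) + a < H then (1:ℤ) else 0)
      = max ((H:ℤ) - |a|) 0 := by
  rw [← Finset.sum_filter]
  have e : (Finset.range H).filter (fun n : ℕ => 0 ≤ (n:ℤ) + a ∧ (n:ℤ) + a < H)
      = Finset.Ico ((-a).toNat) (min (((H:ℤ) - a).toNat) H) := by
    ext n
    simp only [Finset.mem_filter, Finset.mem_range, Finset.mem_Ico]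
    omega
  rw [e, Finset.sum_const, Nat.card_Ico, nsmul_eq_mul, mul_one]
  rcases abs_cases a with ⟨h1, h2⟩ | ⟨h1, h2⟩ <;> rw [h1] <;> omega

lemma zmod_eq_iff_dvd' (ℓ m n : ℕ) : ((m : ZMod ℓ) = (n : ZMod ℓ)) ↔ (ℓ:ℤ) ∣ ((m:ℤ) - n) := by
  rw [ZMod.natCast_eq_natCast_iff, Nat.modEq_iff_dvd, dvd_sub_comm]

lemma myInnerSum (ℓ h H : ℕ) (hℓ : 0 < ℓ) (hH : H ≤ 2*h) (z : ℂ) (n : ℕ) (hn : n < H) :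
    (∑ b ∈ Finset.Icc (-(2*(h:ℤ))) (2*(h:ℤ)),
        if 0 ≤ (n:ℤ) + ℓ*b ∧ (n:ℤ) + ℓ*b < H then z ^ ((ℓ:ℤ)*b) else 0)
      = ∑ m ∈ Finset.range H, if ((m : ZMod ℓ) = (n : ZMod ℓ)) then z ^ ((m:ℤ) - n) else 0 := by
  rw [← Finset.sum_filter, ← Finset.sum_filter]
  refine Finset.sum_nbij' (i := fun b => ((n:ℤ) + ℓ*b).toNat)
    (j := fun m => ((m:ℤ) - n) / ℓ) ?_ ?_ ?_ ?_ ?_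
  · intro b hb
    simp only [Finset.mem_filter, Finset.mem_Icc, Finset.mem_range] at hb ⊢
    obtain ⟨-, hb1, hb2⟩ := hb
    refine ⟨by omega, ?_⟩
    rw [zmod_eq_iff_dvd']
    have : (((((n:ℤ) + ℓ*b).toNat : ℕ)) : ℤ) = (n:ℤ) + ℓ*b := by omega
    rw [this]
    exact ⟨b, by ring⟩
  · intro m hm
    simp only [Finset.mem_filter, Finset.mem_range, Finset.mem_Icc] at hm ⊢
    obtain ⟨hm1, hm2⟩ := hm
    rw [zmod_eq_iff_dvd'] at hm2
    have hmul : (ℓ:ℤ) * (((m:ℤ) - n) / ℓ) = (m:ℤ) - n := Int.mul_ediv_cancel' hm2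
    have habs : |(m:ℤ) - n| = (ℓ:ℤ) * |((m:ℤ) - n) / ℓ| := by
      calc |(m:ℤ) - n| = |(ℓ:ℤ) * (((m:ℤ) - n) / ℓ)| := by rw [hmul]
        _ = |(ℓ:ℤ)| * |((m:ℤ) - n) / ℓ| := abs_mul _ _
        _ = (ℓ:ℤ) * |((m:ℤ) - n) / ℓ| := by
            rw [abs_of_nonneg (show (0:ℤ) ≤ ℓ by positivity)]
    have hb1 : |((m:ℤ) - n) / ℓ| ≤ |(m:ℤ) - n| := by
      rw [habs]
      exact le_mul_of_one_le_left (abs_nonneg _) (by exact_mod_cast hℓ)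
    refine ⟨?_, by omega⟩
    rcases abs_cases (((m:ℤ) - n) / ℓ) with ⟨e1, e2⟩ | ⟨e1, e2⟩ <;>
      rcases abs_cases ((m:ℤ) - n) with ⟨f1, f2⟩ | ⟨f1, f2⟩ <;> omega
  · intro b hb
    simp only [Finset.mem_filter, Finset.mem_Icc] at hb
    show (((((n:ℤ) + ℓ*b).toNat : ℕ) : ℤ) - n) / ℓ = b
    have h1 : ((((n:ℤ) + ℓ*b).toNat : ℕ) : ℤ) = (n:ℤ) + ℓ*b := by omega
    rw [h1]
    have : (n:ℤ) + ℓ*b - n = (ℓ:ℤ) * b := by ring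
    rw [this, Int.mul_ediv_cancel_left _ (by exact_mod_cast hℓ.ne')]
  · intro m hm
    simp only [Finset.mem_filter, Finset.mem_range] at hm
    obtain ⟨hm1, hm2⟩ := hm
    rw [zmod_eq_iff_dvd'] at hm2
    have hmul : (ℓ:ℤ) * (((m:ℤ) - n) / ℓ) = (m:ℤ) - n := Int.mul_ediv_cancel' hm2
    show ((n:ℤ) + ℓ*(((m:ℤ) - n) / ℓ)).toNat = m
    omega
  · intro b hb
    simp only [Finset.mem_filter, Finset.mem_Icc] at hb
    have h1 : ((((n:ℤ) + ℓ*b).toNat : ℕ) : ℤ) = (n:ℤ) + ℓ*b := by omega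
    show z ^ ((ℓ:ℤ)*b) = z ^ (((((n:ℤ) + ℓ*b).toNat : ℕ) : ℤ) - n)
    rw [h1]
    congr 1
    ring

noncomputable def Ssum (ℓ : ℕ) (z : ℂ) (H : ℕ) (r : ZMod ℓ) : ℂ :=
  ∑ m ∈ Finset.range H, if ((m : ZMod ℓ) = r) then z ^ m else 0

lemma stepA (ℓ h H : ℕ) (hℓ : 0 < ℓ) (hH : H ≤ 2*h) (z : ℂ) :
    (∑ b ∈ Finset.Icc (-(2*(h:ℤ))) (2*(h:ℤ)),
        ((max ((H:ℤ) - |(ℓ:ℤ)*b|) 0 : ℤ) : ℂ) * z ^ ((ℓ:ℤ)*b))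
      = ∑ n ∈ Finset.range H, ∑ m ∈ Finset.range H,
          if ((m : ZMod ℓ) = (n : ZMod ℓ)) then z ^ ((m:ℤ) - n) else 0 := by
  have e1 : ∀ b : ℤ, ((max ((H:ℤ) - |(ℓ:ℤ)*b|) 0 : ℤ) : ℂ) * z ^ ((ℓ:ℤ)*b)
      = ∑ n ∈ Finset.range H,
          if 0 ≤ (n:ℤ) + ℓ*b ∧ (n:ℤ) + ℓ*b < H then z ^ ((ℓ:ℤ)*b) else 0 := by
    intro b
    rw [← count_eq H ((ℓ:ℤ)*b)]
    push_cast
    rw [Finset.sum_mul]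
    refine Finset.sum_congr rfl fun n _ => ?_
    rw [ite_mul, one_mul, zero_mul]
  calc (∑ b ∈ Finset.Icc (-(2*(h:ℤ))) (2*(h:ℤ)),
        ((max ((H:ℤ) - |(ℓ:ℤ)*b|) 0 : ℤ) : ℂ) * z ^ ((ℓ:ℤ)*b))
      = ∑ b ∈ Finset.Icc (-(2*(h:ℤ))) (2*(h:ℤ)), ∑ n ∈ Finset.range H,
          if 0 ≤ (n:ℤ) + ℓ*b ∧ (n:ℤ) + ℓ*b < H then z ^ ((ℓ:ℤ)*b) else 0 :=
        Finset.sum_congr rfl fun b _ => e1 b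
    _ = ∑ n ∈ Finset.range H, ∑ b ∈ Finset.Icc (-(2*(h:ℤ))) (2*(h:ℤ)),
          if 0 ≤ (n:ℤ) + ℓ*b ∧ (n:ℤ) + ℓ*b < H then z ^ ((ℓ:ℤ)*b) else 0 :=
        Finset.sum_comm
    _ = ∑ n ∈ Finset.range H, ∑ m ∈ Finset.range H,
          if ((m : ZMod ℓ) = (n : ZMod ℓ)) then z ^ ((m:ℤ) - n) else 0 := by
        refine Finset.sum_congr rfl fun n hn => ?_
        exact myInnerSum ℓ h H hℓ hH z n (Finset.mem_range.mp hn)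

lemma stepB (ℓ : ℕ) [NeZero ℓ] (H : ℕ) (z : ℂ) (hz : ‖z‖ = 1) :
    (∑ n ∈ Finset.range H, ∑ m ∈ Finset.range H,
        if ((m : ZMod ℓ) = (n : ZMod ℓ)) then z ^ ((m:ℤ) - n) else 0)
      = ∑ r : ZMod ℓ, Ssum ℓ z H r * (starRingEnd ℂ) (Ssum ℓ z H r) := by
  have hz0 : z ≠ 0 := by intro e; rw [e] at hz; simp at hz
  have hzn : ‖z‖ = 1 := hz
  have key : ∀ m n : ℕ, z ^ ((m:ℤ) - n) = z ^ m * (starRingEnd ℂ) (z ^ n) := by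
    intro m n
    rw [zpow_sub₀ hz0, zpow_natCast, zpow_natCast, div_eq_mul_inv,
      ← Complex.inv_eq_conj (by rw [norm_pow, hzn, one_pow])]
  calc (∑ n ∈ Finset.range H, ∑ m ∈ Finset.range H,
        if ((m : ZMod ℓ) = (n : ZMod ℓ)) then z ^ ((m:ℤ) - n) else 0)
      = ∑ m ∈ Finset.range H, ∑ n ∈ Finset.range H,
        (if ((m : ZMod ℓ) = (n : ZMod ℓ)) then z ^ ((m:ℤ) - n) else 0) := Finset.sum_comm
    _ = ∑ m ∈ Finset.range H, ∑ n ∈ Finset.range H, ∑ r : ZMod ℓ,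
        (if ((m : ZMod ℓ) = r) then z ^ m else 0) *
          (if ((n : ZMod ℓ) = r) then (starRingEnd ℂ) (z ^ n) else 0) := by
      refine Finset.sum_congr rfl fun m _ => Finset.sum_congr rfl fun n _ => ?_
      simp only [ite_mul, mul_ite, zero_mul, mul_zero, Finset.sum_ite_eq,
        Finset.mem_univ, if_true]
      split_ifs with e
      · exact key m n
      · rfl
    _ = ∑ r : ZMod ℓ, ∑ m ∈ Finset.range H, ∑ n ∈ Finset.range H,
        (if ((m : ZMod ℓ) = r) then z ^ m else 0) *
          (if ((n : ZMod ℓ) = r) then (starRingEnd ℂ) (z ^ n) else 0) := by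
      have e1 : ∀ m : ℕ, (∑ n ∈ Finset.range H, ∑ r : ZMod ℓ,
          (if ((m : ZMod ℓ) = r) then z ^ m else 0) *
            (if ((n : ZMod ℓ) = r) then (starRingEnd ℂ) (z ^ n) else 0))
          = ∑ r : ZMod ℓ, ∑ n ∈ Finset.range H,
            (if ((m : ZMod ℓ) = r) then z ^ m else 0) *
              (if ((n : ZMod ℓ) = r) then (starRingEnd ℂ) (z ^ n) else 0) :=
        fun m => Finset.sum_comm
      simp_rw [e1]
      exact Finset.sum_comm
    _ = ∑ r : ZMod ℓ, Ssum ℓ z H r * (starRingEnd ℂ) (Ssum ℓ z H r) := by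
      refine Finset.sum_congr rfl fun r _ => ?_
      simp only [Ssum]
      rw [map_sum, Finset.sum_mul_sum]
      refine Finset.sum_congr rfl fun m _ => Finset.sum_congr rfl fun n _ => ?_
      rw [apply_ite (starRingEnd ℂ), map_zero]

lemma Ssum_split (ℓ : ℕ) (z : ℂ) (h : ℕ) (r : ZMod ℓ) :
    Ssum ℓ z (h + h) r = Ssum ℓ z h r + z ^ h * Ssum ℓ z h (r - (h : ZMod ℓ)) := by
  simp only [Ssum]
  rw [Finset.sum_range_add, Finset.mul_sum]
  congr 1
  refine Finset.sum_congr rfl fun m _ => ?_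
  have hc : (((h + m : ℕ) : ZMod ℓ) = r) ↔ ((m : ZMod ℓ) = r - (h : ZMod ℓ)) := by
    push_cast
    constructor
    · intro e; rw [← e]; ring
    · intro e; rw [e]; ring
  rw [pow_add]
  split_ifs with e1 e2 e2
  · rfl
  · exact absurd (hc.mp e1) e2
  · exact absurd (hc.mpr e2) e1
  · rw [mul_zero]

lemma sq_ineq (x y : ℝ) : (x + y)^2 ≤ 2*x^2 + 2*y^2 := by nlinarith [sq_nonneg (x - y)]

lemma normsum_le (ℓ : ℕ) [NeZero ℓ] (z : ℂ) (hz : ‖z‖ = 1) (h : ℕ) :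
    (∑ r : ZMod ℓ, Complex.normSq (Ssum ℓ z (h + h) r))
      ≤ 4 * ∑ r : ZMod ℓ, Complex.normSq (Ssum ℓ z h r) := by
  have hzn : ‖z‖ = 1 := hz
  have step : ∀ r : ZMod ℓ, Complex.normSq (Ssum ℓ z (h + h) r)
      ≤ 2 * Complex.normSq (Ssum ℓ z h r)
        + 2 * Complex.normSq (Ssum ℓ z h (r - (h : ZMod ℓ))) := by
    intro r
    rw [Ssum_split]
    have e1 : ∀ w : ℂ, Complex.normSq w = ‖w‖^2 := fun w => (Complex.sq_norm w).symm
    rw [e1, e1, e1]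
    have hn : ‖Ssum ℓ z h r + z ^ h * Ssum ℓ z h (r - (h : ZMod ℓ))‖
        ≤ ‖Ssum ℓ z h r‖ + ‖Ssum ℓ z h (r - (h : ZMod ℓ))‖ := by
      refine (norm_add_le _ _).trans ?_
      rw [norm_mul, norm_pow, hzn, one_pow, one_mul]
    nlinarith [sq_ineq ‖Ssum ℓ z h r‖ ‖Ssum ℓ z h (r - (h : ZMod ℓ))‖, norm_nonneg
      (Ssum ℓ z h r + z ^ h * Ssum ℓ z h (r - (h : ZMod ℓ))), norm_nonneg (Ssum ℓ z h r),
      norm_nonneg (Ssum ℓ z h (r - (h : ZMod ℓ)))]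
  calc (∑ r : ZMod ℓ, Complex.normSq (Ssum ℓ z (h + h) r))
      ≤ ∑ r : ZMod ℓ, (2 * Complex.normSq (Ssum ℓ z h r)
          + 2 * Complex.normSq (Ssum ℓ z h (r - (h : ZMod ℓ)))) :=
        Finset.sum_le_sum fun r _ => step r
    _ = 2 * (∑ r : ZMod ℓ, Complex.normSq (Ssum ℓ z h r))
          + 2 * ∑ r : ZMod ℓ, Complex.normSq (Ssum ℓ z h (r - (h : ZMod ℓ))) := by
        rw [Finset.sum_add_distrib, Finset.mul_sum, Finset.mul_sum]
    _ = 4 * ∑ r : ZMod ℓ, Complex.normSq (Ssum ℓ z h r) := by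
        rw [show (∑ r : ZMod ℓ, Complex.normSq (Ssum ℓ z h (r - (h : ZMod ℓ))))
          = ∑ r : ZMod ℓ, Complex.normSq (Ssum ℓ z h r) from
          Fintype.sum_equiv (Equiv.subRight (h : ZMod ℓ)) _ _ (fun r => rfl)]
        ring

/-- E(H) as a real number. -/
lemma E_eq (ℓ h H : ℕ) (hℓ : 0 < ℓ) [NeZero ℓ] (hH : H ≤ 2*h) (z : ℂ)
    (hz : ‖z‖ = 1) :
    (∑ b ∈ Finset.Icc (-(2*(h:ℤ))) (2*(h:ℤ)),
        ((max ((H:ℤ) - |(ℓ:ℤ)*b|) 0 : ℤ) : ℂ) * z ^ ((ℓ:ℤ)*b))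
      = ((∑ r : ZMod ℓ, Complex.normSq (Ssum ℓ z H r) : ℝ) : ℂ) := by
  rw [stepA ℓ h H hℓ hH z, stepB ℓ H z hz]
  push_cast
  refine Finset.sum_congr rfl fun r _ => ?_
  rw [Complex.mul_conj]

end WwtAux

open WwtAux

open Real in
theorem sum_W_dilated_nonneg (h ℓ : ℕ) (hh : 0 < h) (hℓ : 0 < ℓ) (α : ℝ) :
    ∃ r : ℝ, 0 ≤ r ∧
      (∑' b : ℤ, (Wwt h ((ℓ : ℤ) * b) : ℂ) *
          Complex.exp (2 * π * Complex.I * (b : ℂ) * (α : ℂ))) = (r : ℂ) := by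
  haveI : NeZero ℓ := ⟨hℓ.ne'⟩
  set z : ℂ := Complex.exp (((2 * π * α / ℓ : ℝ) : ℂ) * Complex.I) with hzdef
  have hz : ‖z‖ = 1 := Complex.norm_exp_ofReal_mul_I _
  have hzq : ∀ b : ℤ, z ^ ((ℓ:ℤ) * b) = Complex.exp (2 * π * Complex.I * (b:ℂ) * (α:ℂ)) := by
    intro b
    rw [hzdef, ← Complex.exp_int_mul]
    congr 1
    have hl0 : (ℓ:ℂ) ≠ 0 := by exact_mod_cast hℓ.ne'
    push_cast
    field_simp
  refine ⟨4 * (∑ r : ZMod ℓ, Complex.normSq (Ssum ℓ z h r))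
      - ∑ r : ZMod ℓ, Complex.normSq (Ssum ℓ z (2*h) r), ?_, ?_⟩
  · have := normsum_le ℓ z hz h
    rw [show h + h = 2*h by ring] at this
    linarith
  · rw [tsum_eq_sum (s := Finset.Icc (-(2*(h:ℤ))) (2*(h:ℤ)))
      (f := fun b : ℤ => (Wwt h ((ℓ : ℤ) * b) : ℂ) *
        Complex.exp (2 * π * Complex.I * (b : ℂ) * (α : ℂ))) ?_]
    · have hterm : ∀ b ∈ Finset.Icc (-(2*(h:ℤ))) (2*(h:ℤ)),
          (Wwt h ((ℓ : ℤ) * b) : ℂ) * Complex.exp (2 * π * Complex.I * (b : ℂ) * (α : ℂ))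
            = 4 * (((max (((h:ℕ):ℤ) - |(ℓ:ℤ)*b|) 0 : ℤ) : ℂ) * z ^ ((ℓ:ℤ)*b))
              - ((max ((((2*h : ℕ)):ℤ) - |(ℓ:ℤ)*b|) 0 : ℤ) : ℂ) * z ^ ((ℓ:ℤ)*b) := by
        intro b _
        rw [← hzq b, Wwt_eq_max]
        push_cast
        ring
      rw [Finset.sum_congr rfl hterm, Finset.sum_sub_distrib, ← Finset.mul_sum,
        E_eq ℓ h h hℓ (by omega) z hz, E_eq ℓ h (2*h) hℓ (le_refl _) z hz]
      push_cast
      ring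
    · intro b hb
      simp only [Finset.mem_Icc, not_and_or, not_le] at hb
      have hb' : 2*(h:ℤ) < |b| := by
        rcases abs_cases b with ⟨e1, e2⟩ | ⟨e1, e2⟩ <;> omega
      have h2 : |b| ≤ |(ℓ:ℤ)*b| := by
        rw [abs_mul, Int.abs_natCast]
        exact le_mul_of_one_le_left (abs_nonneg _) (by exact_mod_cast hℓ)
      have hW : Wwt h ((ℓ:ℤ)*b) = 0 := by
        rw [Wwt, if_neg (by omega), if_neg (by omega)]
      simp only [hW]
      simp
end

section
/- Let f = g ∗ 1 (Dirichlet convolution with the constant function 1), where g: ℕ → ℝ vanishes for arguments greater than Q. Then for every nonzero integer a, the correlation C_f(a) = ∑_{N < n ≤ 2N} f(n)f(n−a) equals ∑_{ℓ | a} ∑∑_{(d,q)=1} g(ℓd)g(ℓq) · #{m : N/(ℓd) < m ≤ 2N/(ℓd), m·d ≡ a/ℓ (mod q)}. -/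
open Finset

noncomputable def cntSet (N : ℕ) (a : ℤ) (D E : ℕ) : Finset ℤ :=
  (Finset.Ioc (N:ℤ) (2*N)).filter (fun n => (D:ℤ) ∣ n ∧ (E:ℤ) ∣ n - a)

/-- `f = g ∗ 1` extended to the integers: for `n ≠ 0` sum `g` over the (positive)
divisors of `|n|`; for `n = 0` every positive integer divides `n`, and since `g`
is supported in `[1, Q]` the value is `∑_{d ≤ Q} g d`. -/
noncomputable def sieveFn (Q : ℕ) (g : ℕ → ℝ) (n : ℤ) : ℝ :=
  if n = 0 then ∑ d ∈ Finset.Icc 1 Q, g d else ∑ d ∈ n.natAbs.divisors, g d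

lemma sieveFn_eq (Q : ℕ) (g : ℕ → ℝ) (hg : ∀ q > Q, g q = 0) (n : ℤ) :
    sieveFn Q g n = ∑ D ∈ Finset.Icc 1 Q, if (D:ℤ) ∣ n then g D else 0 := by
  unfold sieveFn
  split_ifs with h
  · refine (Finset.sum_congr rfl fun D hD => ?_).symm
    simp [h]
  · rw [← Finset.sum_filter]
    refine (Finset.sum_subset ?_ ?_).symm
    · intro x hx
      simp only [Finset.mem_filter, Finset.mem_Icc] at hx
      rw [Nat.mem_divisors]
      exact ⟨Int.natCast_dvd.mp hx.2, fun h0 => h (Int.natAbs_eq_zero.mp h0)⟩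
    · intro x hx hx'
      have hx0 : 0 < x := Nat.pos_of_mem_divisors hx
      rw [Nat.mem_divisors] at hx
      simp only [Finset.mem_filter, Finset.mem_Icc, not_and] at hx'
      by_cases hxQ : x ≤ Q
      · exact absurd (Int.natCast_dvd.mpr hx.1) (hx' ⟨hx0, hxQ⟩)
      · exact hg x (lt_of_not_ge hxQ)

lemma claimA (N : ℕ) (a : ℤ) (D E : ℕ) (h : ¬ ((Nat.gcd D E : ℤ) ∣ a)) :
    cntSet N a D E = ∅ := by
  rw [Finset.eq_empty_iff_forall_notMem]
  intro n hn
  simp only [cntSet, Finset.mem_filter] at hn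
  obtain ⟨-, hD, hE⟩ := hn
  apply h
  have h1 : ((Nat.gcd D E : ℤ)) ∣ n :=
    dvd_trans (Int.natCast_dvd_natCast.mpr (Nat.gcd_dvd_left D E)) hD
  have h2 : ((Nat.gcd D E : ℤ)) ∣ n - a :=
    dvd_trans (Int.natCast_dvd_natCast.mpr (Nat.gcd_dvd_right D E)) hE
  simpa using dvd_sub h1 h2

lemma claimB (N : ℕ) (a : ℤ) (ℓ d q : ℕ)
    (hℓa : (ℓ:ℤ) ∣ a) (hℓ : 0 < ℓ) (hd : 0 < d) (hq : 0 < q) :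
    ((Finset.Ioc (N/(ℓ*d)) (2*N/(ℓ*d))).filter
        (fun m : ℕ => ((m : ℤ) * d) % q = (a / (ℓ:ℤ)) % q)).card
      = (cntSet N a (ℓ*d) (ℓ*q)).card := by
  classical
  obtain ⟨a', rfl⟩ := hℓa
  have hℓz : (ℓ:ℤ) ≠ 0 := by exact_mod_cast hℓ.ne'
  have hld : 0 < ℓ * d := Nat.mul_pos hℓ hd
  have hldz : ((ℓ*d : ℕ) : ℤ) ≠ 0 := by exact_mod_cast hld.ne'
  have ha' : ((ℓ:ℤ) * a') / (ℓ:ℤ) = a' := Int.mul_ediv_cancel_left _ hℓz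
  rw [ha']
  refine Finset.card_bij' (fun m _ => ((ℓ*d : ℕ) * m : ℤ))
    (fun n _ => (n / ((ℓ*d : ℕ) : ℤ)).toNat) ?_ ?_ ?_ ?_
  · -- forward membership
    intro m hm
    simp only [Finset.mem_filter, Finset.mem_Ioc, cntSet] at hm ⊢
    obtain ⟨⟨h1, h2⟩, h3⟩ := hm
    have hb1 : N < ℓ * d * m := by
      rw [Nat.mul_comm (ℓ*d) m]; exact (Nat.div_lt_iff_lt_mul hld).mp h1
    have hb2 : ℓ * d * m ≤ 2 * N := by
      rw [Nat.mul_comm (ℓ*d) m]; exact (Nat.le_div_iff_mul_le hld).mp h2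
    have hmod : (q:ℤ) ∣ (m : ℤ) * d - a' := (Int.ModEq.symm h3).dvd
    refine ⟨⟨by exact_mod_cast hb1, by push_cast; push_cast at hb2; linarith⟩,
      ⟨(m:ℤ), rfl⟩, ?_⟩
    have h4 : ((ℓ:ℤ) * q) ∣ (ℓ:ℤ) * ((m:ℤ) * d - a') := mul_dvd_mul_left _ hmod
    have : ((ℓ*q : ℕ) : ℤ) ∣ ((ℓ*d : ℕ):ℤ) * m - (ℓ:ℤ) * a' := by
      push_cast
      convert h4 using 1
      ring
    exact this
  · -- backward membership
    intro n hn
    simp only [Finset.mem_filter, Finset.mem_Ioc, cntSet] at hn ⊢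
    obtain ⟨⟨h1, h2⟩, ⟨c, rfl⟩, hdvd⟩ := hn
    have hpos : (0:ℤ) < ((ℓ*d : ℕ):ℤ) := by exact_mod_cast hld
    have hc0 : 0 ≤ c := by
      by_contra hc
      push_neg at hc
      nlinarith [Int.natCast_nonneg N]
    rw [Int.mul_ediv_cancel_left _ hldz]
    have hcast : ((c.toNat : ℤ)) = c := Int.toNat_of_nonneg hc0
    have hb1 : (N:ℤ) < ((ℓ*d : ℕ):ℤ) * c.toNat := by rw [hcast]; exact h1
    have hb2 : ((ℓ*d : ℕ) : ℤ) * c.toNat ≤ 2*N := by rw [hcast]; exact h2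
    have hb1' : N < ℓ * d * c.toNat := by exact_mod_cast hb1
    have hb2' : ℓ * d * c.toNat ≤ 2 * N := by exact_mod_cast hb2
    refine ⟨⟨(Nat.div_lt_iff_lt_mul hld).mpr (by rw [Nat.mul_comm]; exact hb1'),
      (Nat.le_div_iff_mul_le hld).mpr (by rw [Nat.mul_comm]; exact hb2')⟩, ?_⟩
    -- congruence
    have hq' : (q:ℤ) ∣ (c.toNat : ℤ) * d - a' := by
      have h5 : ((ℓ:ℤ) * q) ∣ (ℓ:ℤ) * ((c.toNat:ℤ) * d - a') := by
        have heq : (ℓ:ℤ) * ((c.toNat:ℤ) * d - a') = ((ℓ*d:ℕ):ℤ) * c - (ℓ:ℤ)*a' := by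
          rw [hcast]; push_cast; ring
        rw [heq]
        exact_mod_cast hdvd
      exact (mul_dvd_mul_iff_left hℓz).mp h5
    have hq'' : (q:ℤ) ∣ a' - (c.toNat : ℤ) * d := by
      rw [show a' - (c.toNat:ℤ)*d = -((c.toNat:ℤ)*d - a') by ring]
      exact dvd_neg.mpr hq'
    exact Int.modEq_iff_dvd.mpr hq''
  · intro m hm
    show ((((ℓ*d : ℕ):ℤ) * m) / ((ℓ*d : ℕ):ℤ)).toNat = m
    rw [Int.mul_ediv_cancel_left _ hldz, Int.toNat_natCast]
  · intro n hn
    simp only [Finset.mem_filter, Finset.mem_Ioc, cntSet] at hn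
    obtain ⟨⟨h1, h2⟩, ⟨c, rfl⟩, -⟩ := hn
    have hpos : (0:ℤ) < ((ℓ*d : ℕ):ℤ) := by exact_mod_cast hld
    have hc0 : 0 ≤ c := by
      by_contra hc
      push_neg at hc
      nlinarith [Int.natCast_nonneg N]
    show ((ℓ*d : ℕ):ℤ) * ((((ℓ*d : ℕ):ℤ) * c) / ((ℓ*d : ℕ):ℤ)).toNat = ((ℓ*d : ℕ):ℤ) * c
    rw [Int.mul_ediv_cancel_left _ hldz, Int.toNat_of_nonneg hc0]

theorem correlation_formula (N Q : ℕ) (hN : 0 < N) (hQ : 0 < Q)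
    (g : ℕ → ℝ) (hg : ∀ q > Q, g q = 0) (a : ℤ) (ha : a ≠ 0) :
    (∑ n ∈ Finset.Ioc (N:ℤ) (2*N), sieveFn Q g n * sieveFn Q g (n - a))
      = ∑ ℓ ∈ a.natAbs.divisors, ∑ d ∈ Finset.Icc 1 Q, ∑ q ∈ Finset.Icc 1 Q,
          if Nat.Coprime d q then
            g (ℓ*d) * g (ℓ*q) *
              (((Finset.Ioc (N/(ℓ*d)) (2*N/(ℓ*d))).filter
                  (fun m : ℕ => ((m : ℤ) * d) % q = (a / (ℓ:ℤ)) % q)).card : ℝ)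
          else 0 := by
  classical
  -- Step 1: expand the left side
  have step1 : (∑ n ∈ Finset.Ioc (N:ℤ) (2*N), sieveFn Q g n * sieveFn Q g (n - a))
      = ∑ p ∈ (Finset.Icc 1 Q) ×ˢ (Finset.Icc 1 Q),
          g p.1 * g p.2 * ((cntSet N a p.1 p.2).card : ℝ) := by
    rw [Finset.sum_product]
    simp_rw [sieveFn_eq Q g hg, Finset.sum_mul_sum, ite_zero_mul_ite_zero]
    rw [Finset.sum_comm]
    refine Finset.sum_congr rfl fun D _ => ?_
    rw [Finset.sum_comm]
    refine Finset.sum_congr rfl fun E _ => ?_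
    rw [← Finset.sum_filter, Finset.sum_const, nsmul_eq_mul]
    rw [mul_comm]
    rfl
  rw [step1]
  -- restrict the left sum to pairs whose gcd divides |a|
  have hA : ∀ p ∈ (Finset.Icc 1 Q) ×ˢ (Finset.Icc 1 Q),
      g p.1 * g p.2 * ((cntSet N a p.1 p.2).card : ℝ) ≠ 0 → p.1.gcd p.2 ∣ a.natAbs := by
    intro p _ hne
    by_contra hdvd
    apply hne
    rw [claimA N a p.1 p.2 (fun hc => hdvd (Int.natCast_dvd.mp hc))]
    simp
  rw [← Finset.sum_filter_of_ne hA]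
  -- rewrite the right side as a sum over a filtered product set
  have step3 : (∑ ℓ ∈ a.natAbs.divisors, ∑ d ∈ Finset.Icc 1 Q, ∑ q ∈ Finset.Icc 1 Q,
          if Nat.Coprime d q then
            g (ℓ*d) * g (ℓ*q) *
              (((Finset.Ioc (N/(ℓ*d)) (2*N/(ℓ*d))).filter
                  (fun m : ℕ => ((m : ℤ) * d) % q = (a / (ℓ:ℤ)) % q)).card : ℝ)
          else 0)
      = ∑ t ∈ (a.natAbs.divisors ×ˢ ((Finset.Icc 1 Q) ×ˢ (Finset.Icc 1 Q))).filter
            (fun t : ℕ × ℕ × ℕ => Nat.Coprime t.2.1 t.2.2 ∧ t.1*t.2.1 ≤ Q ∧ t.1*t.2.2 ≤ Q),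
          g (t.1*t.2.1) * g (t.1*t.2.2) * ((cntSet N a (t.1*t.2.1) (t.1*t.2.2)).card : ℝ) := by
    simp only [← Finset.sum_product']
    have hB : ∀ t ∈ a.natAbs.divisors ×ˢ ((Finset.Icc 1 Q) ×ˢ (Finset.Icc 1 Q)),
        (if Nat.Coprime t.2.1 t.2.2 then
            g (t.1*t.2.1) * g (t.1*t.2.2) *
              (((Finset.Ioc (N/(t.1*t.2.1)) (2*N/(t.1*t.2.1))).filter
                  (fun m : ℕ => ((m : ℤ) * t.2.1) % t.2.2 = (a / (t.1:ℤ)) % t.2.2)).card : ℝ)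
          else 0) ≠ 0 →
        Nat.Coprime t.2.1 t.2.2 ∧ t.1*t.2.1 ≤ Q ∧ t.1*t.2.2 ≤ Q := by
      intro t _ hne
      by_cases hcop : Nat.Coprime t.2.1 t.2.2
      · rw [if_pos hcop] at hne
        refine ⟨hcop, ?_, ?_⟩
        · by_contra hle
          exact hne (by rw [hg _ (lt_of_not_ge hle)]; ring)
        · by_contra hle
          exact hne (by rw [hg _ (lt_of_not_ge hle)]; ring)
      · exact absurd (if_neg hcop) hne
    rw [← Finset.sum_filter_of_ne hB]
    refine Finset.sum_congr rfl fun t ht => ?_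
    simp only [Finset.mem_filter, Finset.mem_product, Finset.mem_Icc] at ht
    obtain ⟨⟨hℓ, ⟨hd1, _⟩, ⟨hq1, _⟩⟩, hcop, -, -⟩ := ht
    rw [if_pos hcop, claimB N a t.1 t.2.1 t.2.2
      (Int.natCast_dvd.mpr (Nat.mem_divisors.mp hℓ).1)
      (Nat.pos_of_mem_divisors hℓ) hd1 hq1]
  rw [step3]
  -- the bijection between the two index sets
  refine Finset.sum_nbij' (i := fun p : ℕ × ℕ => (p.1.gcd p.2, p.1 / p.1.gcd p.2, p.2 / p.1.gcd p.2))
    (j := fun t : ℕ × ℕ × ℕ => (t.1*t.2.1, t.1*t.2.2)) ?_ ?_ ?_ ?_ ?_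
  · intro p hp
    simp only [Finset.mem_filter, Finset.mem_product, Finset.mem_Icc] at hp ⊢
    obtain ⟨⟨⟨hD1, hD2⟩, ⟨hE1, hE2⟩⟩, hgcd⟩ := hp
    have hg0 : 0 < p.1.gcd p.2 := Nat.gcd_pos_of_pos_left _ hD1
    have hcD : p.1.gcd p.2 * (p.1 / p.1.gcd p.2) = p.1 := Nat.mul_div_cancel' (Nat.gcd_dvd_left _ _)
    have hcE : p.1.gcd p.2 * (p.2 / p.1.gcd p.2) = p.2 := Nat.mul_div_cancel' (Nat.gcd_dvd_right _ _)
    refine ⟨⟨Nat.mem_divisors.mpr ⟨hgcd, Int.natAbs_ne_zero.mpr ha⟩,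
      ⟨Nat.div_pos (Nat.le_of_dvd hD1 (Nat.gcd_dvd_left _ _)) hg0, le_trans (Nat.div_le_self _ _) hD2⟩,
      ⟨Nat.div_pos (Nat.le_of_dvd hE1 (Nat.gcd_dvd_right _ _)) hg0, le_trans (Nat.div_le_self _ _) hE2⟩⟩,
      Nat.coprime_div_gcd_div_gcd hg0, ?_, ?_⟩
    · rw [hcD]; exact hD2
    · rw [hcE]; exact hE2
  · intro t ht
    simp only [Finset.mem_filter, Finset.mem_product, Finset.mem_Icc] at ht ⊢
    obtain ⟨⟨hℓ, ⟨hd1, hd2⟩, ⟨hq1, hq2⟩⟩, hcop, hdQ, hqQ⟩ := ht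
    have hℓ0 : 0 < t.1 := Nat.pos_of_mem_divisors hℓ
    refine ⟨⟨⟨Nat.mul_pos hℓ0 hd1, hdQ⟩, Nat.mul_pos hℓ0 hq1, hqQ⟩, ?_⟩
    rw [Nat.gcd_mul_left, hcop, Nat.mul_one]
    exact (Nat.mem_divisors.mp hℓ).1
  · intro p hp
    simp only [Finset.mem_filter, Finset.mem_product, Finset.mem_Icc] at hp
    have hcD : p.1.gcd p.2 * (p.1 / p.1.gcd p.2) = p.1 := Nat.mul_div_cancel' (Nat.gcd_dvd_left _ _)
    have hcE : p.1.gcd p.2 * (p.2 / p.1.gcd p.2) = p.2 := Nat.mul_div_cancel' (Nat.gcd_dvd_right _ _)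
    exact Prod.ext hcD hcE
  · intro t ht
    simp only [Finset.mem_filter, Finset.mem_product, Finset.mem_Icc] at ht
    obtain ⟨⟨hℓ, ⟨hd1, hd2⟩, ⟨hq1, hq2⟩⟩, hcop, hdQ, hqQ⟩ := ht
    have hℓ0 : 0 < t.1 := Nat.pos_of_mem_divisors hℓ
    have hgcd : (t.1*t.2.1).gcd (t.1*t.2.2) = t.1 := by
      rw [Nat.gcd_mul_left, hcop, Nat.mul_one]
    show ((t.1*t.2.1).gcd (t.1*t.2.2), (t.1*t.2.1) / (t.1*t.2.1).gcd (t.1*t.2.2),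
      (t.1*t.2.2) / (t.1*t.2.1).gcd (t.1*t.2.2)) = t
    rw [hgcd, Nat.mul_div_cancel_left _ hℓ0, Nat.mul_div_cancel_left _ hℓ0]
  · intro p hp
    simp only [Finset.mem_filter, Finset.mem_product, Finset.mem_Icc] at hp
    have hcD : p.1.gcd p.2 * (p.1 / p.1.gcd p.2) = p.1 := Nat.mul_div_cancel' (Nat.gcd_dvd_left _ _)
    have hcE : p.1.gcd p.2 * (p.2 / p.1.gcd p.2) = p.2 := Nat.mul_div_cancel' (Nat.gcd_dvd_right _ _)
    simp only [hcD, hcE]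
end

section
/- Let q and h be positive integers, ℓ a positive integer, and K: ℤ → ℝ even, supported on [−2h, 2h], with |K(a)| ≤ 2h for all a. Then the divisor-flipped identity holds: 2q·∑_{1 ≤ j ≤ q/2} (1/j)·∑_{a: ja ≡ 0 (mod q)} K(aℓ) = 2·∑_{t | q, t > 1} t·∑_{j ≤ t/2, gcd(j,t)=1} (1/j)·∑_{a ≡ 0 (mod t)} K(aℓ), and this quantity is ≪_ε (qh + h²)·q^ε for every ε > 0. -/
open Real Finset


lemma aux_two_pow (ε : ℝ) (hε : 0 < ε) (a : ℕ) :
    (a + 1 : ℝ) ≤ (1 + 1/(ε * Real.log 2)) * (2:ℝ) ^ (ε * a) := by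
  have hl2 : (0:ℝ) < Real.log 2 := Real.log_pos (by norm_num)
  have h1 : (1:ℝ) ≤ (2:ℝ) ^ (ε * a) := Real.one_le_rpow (by norm_num) (by positivity)
  have h2 : ε * a * Real.log 2 ≤ (2:ℝ) ^ (ε * a) := by
    have := Real.add_one_le_exp (ε * a * Real.log 2)
    rw [Real.rpow_def_of_pos (by norm_num)]
    calc ε * a * Real.log 2 ≤ ε * a * Real.log 2 + 1 := by linarith
    _ ≤ Real.exp (ε * a * Real.log 2) := by linarith [Real.add_one_le_exp (ε * a * Real.log 2)]
    _ = Real.exp (Real.log 2 * (ε * a)) := by ring_nf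
  have key : (a:ℝ) ≤ (1/(ε * Real.log 2)) * (2:ℝ) ^ (ε * a) := by
    rw [div_mul_eq_mul_div, le_div_iff₀ (by positivity)]
    calc (a:ℝ) * (ε * Real.log 2) = ε * a * Real.log 2 := by ring
    _ ≤ (2:ℝ) ^ (ε * a) := h2
    _ = 1 * (2:ℝ)^(ε * a) := (one_mul _).symm
  nlinarith [h1, key]

lemma divisor_bound (ε : ℝ) (hε : 0 < ε) :
    ∃ C : ℝ, 1 ≤ C ∧ ∀ n : ℕ, 0 < n → (n.divisors.card : ℝ) ≤ C * (n:ℝ) ^ ε := by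
  set M : ℝ := 1 + 1/(ε * Real.log 2) with hM
  have hl2 : (0:ℝ) < Real.log 2 := Real.log_pos (by norm_num)
  have hM1 : 1 ≤ M := le_add_of_nonneg_right (by positivity)
  set N : ℕ := ⌈(2:ℝ) ^ (1/ε)⌉₊ + 1 with hN
  refine ⟨M ^ N, one_le_pow₀ hM1, fun n hn => ?_⟩
  have hn0 : n ≠ 0 := hn.ne'
  rw [Nat.card_divisors hn0]
  have hprod : (n:ℝ) ^ ε = ∏ p ∈ n.primeFactors, ((p:ℝ) ^ (ε * (n.factorization p))) := by
    conv_lhs => rw [← Nat.factorization_prod_pow_eq_self hn0,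
      Nat.prod_factorization_eq_prod_primeFactors (fun p k => p ^ k)]
    rw [Nat.cast_prod]
    push_cast
    rw [← Real.finset_prod_rpow _ _ (fun p hp => by positivity)]
    refine Finset.prod_congr rfl fun p hp => ?_
    rw [← Real.rpow_natCast (p:ℝ) (n.factorization p), ← Real.rpow_mul (by positivity), mul_comm]
  have hcast : ((∏ p ∈ n.primeFactors, (n.factorization p + 1) : ℕ) : ℝ)
      = ∏ p ∈ n.primeFactors, ((n.factorization p : ℝ) + 1) := by push_cast; rfl
  rw [hcast, hprod]
  set w : ℕ → ℝ := fun p => if (p:ℝ) < (2:ℝ) ^ (1/ε) then M else 1 with hw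
  have hstep : ∀ p ∈ n.primeFactors, ((n.factorization p : ℝ) + 1)
      ≤ w p * (p:ℝ) ^ (ε * (n.factorization p)) := by
    intro p hp
    have hpp : p.Prime := Nat.prime_of_mem_primeFactors hp
    have hp2 : (2:ℝ) ≤ (p:ℝ) := by exact_mod_cast hpp.two_le
    by_cases hsmall : (p:ℝ) < (2:ℝ) ^ (1/ε)
    · simp only [hw, if_pos hsmall]
      calc ((n.factorization p : ℝ) + 1) ≤ M * (2:ℝ) ^ (ε * (n.factorization p)) :=
            aux_two_pow ε hε _
      _ ≤ M * (p:ℝ) ^ (ε * (n.factorization p)) := by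
            apply mul_le_mul_of_nonneg_left _ (by linarith)
            exact Real.rpow_le_rpow (by norm_num) hp2 (by positivity)
    · simp only [hw, if_neg hsmall, one_mul]
      push_neg at hsmall
      have h2p : (2:ℝ) ≤ (p:ℝ) ^ ε := by
        calc (2:ℝ) = ((2:ℝ) ^ (1/ε)) ^ ε := by
              rw [← Real.rpow_mul (by norm_num), one_div, inv_mul_cancel₀ hε.ne', Real.rpow_one]
        _ ≤ (p:ℝ) ^ ε := Real.rpow_le_rpow (by positivity) hsmall hε.le
      set a := n.factorization p
      calc ((a:ℝ) + 1) = ((a + 1 : ℕ) : ℝ) := by push_cast; ring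
      _ ≤ ((2 ^ a : ℕ) : ℝ) := by exact_mod_cast (Nat.lt_two_pow_self : a < 2 ^ a)
      _ = (2:ℝ) ^ (a:ℕ) := by push_cast; ring
      _ ≤ ((p:ℝ) ^ ε) ^ (a:ℕ) := pow_le_pow_left₀ (by norm_num) h2p a
      _ = (p:ℝ) ^ (ε * a) := by
          rw [← Real.rpow_natCast ((p:ℝ)^ε) a, ← Real.rpow_mul (by positivity)]
  calc ∏ p ∈ n.primeFactors, ((n.factorization p : ℝ) + 1)
      ≤ ∏ p ∈ n.primeFactors, (w p * (p:ℝ) ^ (ε * (n.factorization p))) :=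
        Finset.prod_le_prod (fun p _ => by positivity) hstep
  _ = (∏ p ∈ n.primeFactors, w p) * ∏ p ∈ n.primeFactors, (p:ℝ) ^ (ε * (n.factorization p)) :=
        Finset.prod_mul_distrib
  _ ≤ M ^ N * ∏ p ∈ n.primeFactors, (p:ℝ) ^ (ε * (n.factorization p)) := by
      apply mul_le_mul_of_nonneg_right _ (Finset.prod_nonneg fun p _ => by positivity)
      have he : ∏ p ∈ n.primeFactors, w p
          = M ^ (n.primeFactors.filter (fun (p : ℕ) => (p:ℝ) < (2:ℝ)^(1/ε))).card := by
        rw [hw, Finset.prod_ite, Finset.prod_const, Finset.prod_const, one_pow, mul_one]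
      rw [he]
      apply pow_le_pow_right₀ hM1
      have hsub : (n.primeFactors.filter (fun (p : ℕ) => (p:ℝ) < (2:ℝ)^(1/ε))) ⊆ Finset.range N := by
        intro p hp
        simp only [Finset.mem_filter] at hp
        rw [Finset.mem_range]
        have : (p:ℝ) < (N:ℝ) := lt_of_lt_of_le hp.2 (by
          rw [hN]; push_cast; linarith [Nat.le_ceil ((2:ℝ) ^ (1/ε))])
        exact_mod_cast this
      calc _ ≤ (Finset.range N).card := Finset.card_le_card hsub
      _ = N := Finset.card_range N


lemma flip_identity (q : ℕ) (hq : 0 < q) (T : ℕ → ℝ) :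
    (q:ℝ) * ∑ j ∈ Finset.Icc 1 (q/2), (1/(j:ℝ)) * T (q / Nat.gcd j q)
      = ∑ t ∈ q.divisors.filter (fun t => 1 < t), (t:ℝ) *
          ∑ j ∈ (Finset.Icc 1 (t/2)).filter (fun j => Nat.Coprime j t), (1/(j:ℝ)) * T t := by
  rw [Finset.mul_sum]
  have hR : ∑ t ∈ q.divisors.filter (fun t => 1 < t), (t:ℝ) *
      ∑ j ∈ (Finset.Icc 1 (t/2)).filter (fun j => Nat.Coprime j t), (1/(j:ℝ)) * T t
      = ∑ p ∈ ((q.divisors.filter (fun t => 1 < t)).sigma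
          (fun t => (Finset.Icc 1 (t/2)).filter (fun j => Nat.Coprime j t))),
          (p.1:ℝ) * ((1/(p.2:ℝ)) * T p.1) := by
    rw [Finset.sum_sigma]
    exact Finset.sum_congr rfl fun t _ => by rw [Finset.mul_sum]
  rw [hR]
  refine Finset.sum_nbij' (i := fun j => ⟨q / Nat.gcd j q, j / Nat.gcd j q⟩)
    (j := fun p => (q / p.1) * p.2) ?_ ?_ ?_ ?_ ?_
  · -- forward membership
    intro j hj
    rw [Finset.mem_Icc] at hj
    obtain ⟨hj1, hj2⟩ := hj
    set d := Nat.gcd j q with hd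
    have hd0 : 0 < d := Nat.gcd_pos_of_pos_right _ hq
    have hdq : d ∣ q := Nat.gcd_dvd_right _ _
    have hdj : d ∣ j := Nat.gcd_dvd_left _ _
    have hq2 : 2 ≤ q := by omega
    have hjq : j < q := by omega
    have hdlt : d < q := lt_of_le_of_lt (Nat.le_of_dvd (by omega) hdj) hjq
    obtain ⟨k, hk⟩ := hdq
    have hk2 : 2 ≤ k := by nlinarith
    have hqd : q / d = k := by rw [hk, Nat.mul_div_cancel_left _ hd0]
    have h2j : j * 2 ≤ q := (Nat.le_div_iff_mul_le (by norm_num)).mp hj2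
    obtain ⟨j', hj'⟩ := hdj
    have hjd : j / d = j' := by rw [hj', Nat.mul_div_cancel_left _ hd0]
    rw [Finset.mem_sigma]
    constructor
    · show q / d ∈ _
      rw [hqd, Finset.mem_filter, Nat.mem_divisors]
      exact ⟨⟨⟨d, by rw [hk]; ring⟩, by omega⟩, by omega⟩
    · show j / d ∈ Finset.filter (fun i => Nat.Coprime i (q/d)) (Finset.Icc 1 ((q/d)/2))
      rw [Finset.mem_filter, Finset.mem_Icc, hqd, hjd]
      refine ⟨⟨by nlinarith, ?_⟩, ?_⟩
      · rw [Nat.le_div_iff_mul_le (by norm_num)]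
        nlinarith
      · have := Nat.coprime_div_gcd_div_gcd (m := j) (n := q) hd0
        rwa [← hd, hjd, hqd] at this
  · -- backward membership
    intro p hp
    rw [Finset.mem_sigma, Finset.mem_filter, Nat.mem_divisors, Finset.mem_filter,
      Finset.mem_Icc] at hp
    obtain ⟨⟨⟨htq, -⟩, ht1⟩, ⟨hj1, hj2⟩, hcop⟩ := hp
    rw [Finset.mem_Icc]
    have hst : (q / p.1) * p.1 = q := Nat.div_mul_cancel htq
    have hs1 : 1 ≤ q / p.1 := (Nat.one_le_div_iff (by omega)).mpr (Nat.le_of_dvd hq htq)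
    have h2j : p.2 * 2 ≤ p.1 := (Nat.le_div_iff_mul_le (by norm_num)).mp hj2
    refine ⟨Nat.mul_pos hs1 hj1, ?_⟩
    rw [Nat.le_div_iff_mul_le (by norm_num)]
    calc q / p.1 * p.2 * 2 = (q/p.1) * (p.2 * 2) := by ring
    _ ≤ (q/p.1) * p.1 := Nat.mul_le_mul_left _ h2j
    _ = q := hst
  · -- left inverse
    intro j hj
    dsimp only
    rw [Finset.mem_Icc] at hj
    have hdq : Nat.gcd j q ∣ q := Nat.gcd_dvd_right _ _
    have hdj : Nat.gcd j q ∣ j := Nat.gcd_dvd_left _ _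
    rw [Nat.div_div_self hdq hq.ne', Nat.mul_div_cancel' hdj]
  · -- right inverse
    intro p hp
    rw [Finset.mem_sigma, Finset.mem_filter, Nat.mem_divisors, Finset.mem_filter,
      Finset.mem_Icc] at hp
    obtain ⟨⟨⟨htq, -⟩, ht1⟩, ⟨hj1, hj2⟩, hcop⟩ := hp
    have hst : (q / p.1) * p.1 = q := Nat.div_mul_cancel htq
    have hs0 : 0 < q / p.1 := (Nat.one_le_div_iff (by omega)).mpr (Nat.le_of_dvd hq htq)
    set s := q / p.1 with hsdef
    have hg : Nat.gcd (s * p.2) q = s := by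
      rw [← hst, Nat.gcd_mul_left, Nat.Coprime.gcd_eq_one hcop, mul_one]
    rw [hg, Nat.div_div_self htq hq.ne', Nat.mul_div_cancel_left _ hs0]
  · -- values
    intro j hj
    dsimp only
    rw [Finset.mem_Icc] at hj
    obtain ⟨hj1, hj2⟩ := hj
    set d := Nat.gcd j q with hd
    have hd0 : 0 < d := Nat.gcd_pos_of_pos_right _ hq
    have hdq : d ∣ q := Nat.gcd_dvd_right _ _
    have hdj : d ∣ j := Nat.gcd_dvd_left _ _
    obtain ⟨j', hj'⟩ := hdj
    obtain ⟨t, ht⟩ := hdq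
    have hjd : j / d = j' := by rw [hj', Nat.mul_div_cancel_left _ hd0]
    have hqd : q / d = t := by rw [ht, Nat.mul_div_cancel_left _ hd0]
    have hj'0 : 0 < j' := by nlinarith
    simp only [hjd, hqd]
    have e1 : (q:ℝ) = (d:ℝ) * t := by exact_mod_cast congrArg Nat.cast ht
    have e2 : (j:ℝ) = (d:ℝ) * j' := by exact_mod_cast congrArg Nat.cast hj'
    rw [e1, e2]
    have hd0' : (d:ℝ) ≠ 0 := by positivity
    have hj0' : (j':ℝ) ≠ 0 := by positivity
    field_simp


lemma dvd_iff_aux (q j : ℕ) (hq : 0 < q) (hj : 0 < j) (a : ℤ) :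
    (q:ℤ) ∣ (j:ℤ) * a ↔ ((q / Nat.gcd j q : ℕ) : ℤ) ∣ a := by
  set d := Nat.gcd j q with hd
  have hd0 : 0 < d := Nat.gcd_pos_of_pos_right _ hq
  obtain ⟨t, ht⟩ := (Nat.gcd_dvd_right j q : d ∣ q)
  obtain ⟨j', hj'⟩ := (Nat.gcd_dvd_left j q : d ∣ j)
  have hqd : q / d = t := by rw [ht, Nat.mul_div_cancel_left _ hd0]
  have hcop : Nat.Coprime j' t := by
    have := Nat.coprime_div_gcd_div_gcd (m := j) (n := q) hd0
    rwa [← hd, show j / d = j' from by rw [hj', Nat.mul_div_cancel_left _ hd0], hqd] at this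
  rw [hqd]
  have e1 : (q:ℤ) = (d:ℤ) * t := by exact_mod_cast ht
  have e2 : (j:ℤ) = (d:ℤ) * j' := by exact_mod_cast hj'
  rw [e1, e2, mul_assoc, mul_dvd_mul_iff_left (show (d:ℤ) ≠ 0 by positivity)]
  constructor
  · intro h1
    have hc : IsCoprime (t:ℤ) (j':ℤ) := Nat.isCoprime_iff_coprime.mpr hcop.symm
    exact hc.dvd_of_dvd_mul_left h1
  · exact fun h1 => h1.mul_left _

lemma tsum_eq_aux (h ℓ : ℕ) (hℓ : 0 < ℓ) (K : ℤ → ℝ)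
    (hK0 : ∀ a : ℤ, 2*(h:ℤ) < |a| → K a = 0) (P : ℤ → Prop) [DecidablePred P] :
    ∑' a : ℤ, (if P a then K (a * ℓ) else 0)
      = ∑ a ∈ Finset.Icc (-(2*(h:ℤ))) (2*h), (if P a then K (a * ℓ) else 0) := by
  apply tsum_eq_sum
  intro a ha
  rw [Finset.mem_Icc] at ha
  have h1 : 2*(h:ℤ) < |a| := by
    rcases abs_cases a with ⟨he, _⟩ | ⟨he, _⟩ <;> omega
  have h2 : 2*(h:ℤ) < |a * ℓ| := by
    rw [abs_mul]
    calc 2*(h:ℤ) < |a| := h1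
    _ = |a| * 1 := (mul_one _).symm
    _ ≤ |a| * |(ℓ:ℤ)| := by
        apply mul_le_mul_of_nonneg_left _ (abs_nonneg a)
        rw [Int.abs_natCast]; exact_mod_cast hℓ
  simp [hK0 _ h2]

lemma card_mult_bound (h t : ℕ) (ht : 0 < t) :
    (((Finset.Icc (-(2*(h:ℤ))) (2*h)).filter (fun a => (t:ℤ) ∣ a)).card : ℝ)
      ≤ 4*h/(t:ℝ) + 1 := by
  have ht' : (0:ℤ) < t := by exact_mod_cast ht
  set m : ℤ := (2*h) / t with hm
  have hsub : (Finset.Icc (-(2*(h:ℤ))) (2*h)).filter (fun a => (t:ℤ) ∣ a)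
      ⊆ (Finset.Icc (-m) m).image (fun c : ℤ => c * (t:ℤ)) := by
    intro a ha
    rw [Finset.mem_filter, Finset.mem_Icc] at ha
    obtain ⟨⟨hl, hr⟩, c, hc⟩ := ha
    rw [Finset.mem_image]
    refine ⟨c, ?_, by rw [hc]; ring⟩
    rw [Finset.mem_Icc]
    constructor
    · rw [neg_le, hm]
      rw [Int.le_ediv_iff_mul_le ht']
      rw [hc] at hl
      linarith
    · rw [hm, Int.le_ediv_iff_mul_le ht']
      rw [hc] at hr
      linarith
  have hm0 : 0 ≤ m := Int.ediv_nonneg (by positivity) ht'.le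
  have hcard : (((Finset.Icc (-(2*(h:ℤ))) (2*h)).filter (fun a => (t:ℤ) ∣ a)).card : ℤ)
      ≤ 2*m + 1 := by
    calc (((Finset.Icc (-(2*(h:ℤ))) (2*h)).filter (fun a => (t:ℤ) ∣ a)).card : ℤ)
        ≤ (((Finset.Icc (-m) m).image (fun c : ℤ => c * (t:ℤ))).card : ℤ) := by
          exact_mod_cast Finset.card_le_card hsub
    _ ≤ ((Finset.Icc (-m) m).card : ℤ) := by exact_mod_cast Finset.card_image_le
    _ = 2*m + 1 := by
        rw [Int.card_Icc]
        omega
  have hmr : (m:ℝ) ≤ 2*h/(t:ℝ) := by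
    rw [le_div_iff₀ (show (0:ℝ) < t by exact_mod_cast ht)]
    have h2 : m * (t:ℤ) ≤ 2*(h:ℤ) := Int.ediv_mul_le _ (by omega)
    exact_mod_cast h2
  calc (((Finset.Icc (-(2*(h:ℤ))) (2*h)).filter (fun a => (t:ℤ) ∣ a)).card : ℝ)
      ≤ ((2*m + 1 : ℤ) : ℝ) := by exact_mod_cast hcard
  _ = 2*(m:ℝ) + 1 := by push_cast; ring
  _ ≤ 2*(2*h/(t:ℝ)) + 1 := by linarith
  _ = 4*h/(t:ℝ) + 1 := by ring

lemma harm_bound (m q : ℕ) (hq : 1 ≤ q) (hm : m ≤ q) :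
    ∑ j ∈ Finset.Icc 1 m, (1/(j:ℝ)) ≤ 1 + Real.log q := by
  calc ∑ j ∈ Finset.Icc 1 m, (1/(j:ℝ)) ≤ ∑ j ∈ Finset.Icc 1 q, (1/(j:ℝ)) := by
        apply Finset.sum_le_sum_of_subset_of_nonneg
        · exact Finset.Icc_subset_Icc_right hm
        · intro i _ _; positivity
  _ = ((harmonic q : ℚ) : ℝ) := by
        rw [harmonic_eq_sum_Icc]
        push_cast
        exact Finset.sum_congr rfl fun j _ => (one_div _)
  _ ≤ 1 + Real.log q := harmonic_le_one_add_log q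

open Real in
theorem divisor_flip (ε : ℝ) (hε : 0 < ε) : ∃ C : ℝ, ∀ q h ℓ : ℕ,
    0 < q → 0 < h → 0 < ℓ → ∀ K : ℤ → ℝ,
    (∀ a : ℤ, K (-a) = K a) →
    (∀ a : ℤ, 2*(h:ℤ) < |a| → K a = 0) →
    (∀ a : ℤ, |K a| ≤ 2*h) →
    (2 * (q : ℝ) * ∑ j ∈ Finset.Icc 1 (q/2),
        (1 / (j : ℝ)) * ∑' a : ℤ, (if (q : ℤ) ∣ (j : ℤ) * a then K (a * ℓ) else 0))
      = 2 * ∑ t ∈ q.divisors.filter (fun t => 1 < t),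
          (t : ℝ) * ∑ j ∈ (Finset.Icc 1 (t/2)).filter (fun j => Nat.Coprime j t),
            (1 / (j : ℝ)) * ∑' a : ℤ, (if (t : ℤ) ∣ a then K (a * ℓ) else 0) ∧
    |2 * (q : ℝ) * ∑ j ∈ Finset.Icc 1 (q/2),
        (1 / (j : ℝ)) * ∑' a : ℤ, (if (q : ℤ) ∣ (j : ℤ) * a then K (a * ℓ) else 0)|
      ≤ C * ((q : ℝ) * h + (h : ℝ)^2) * (q : ℝ)^ε := by
  obtain ⟨C₁, hC₁1, hC₁⟩ := divisor_bound (ε/2) (half_pos hε)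
  refine ⟨16 * C₁ * (1 + 2/ε), fun q h ℓ hq hh hℓ K hKeven hK0 hKb => ?_⟩
  set T : ℕ → ℝ := fun t => ∑' a : ℤ, (if (t:ℤ) ∣ a then K (a * ℓ) else 0) with hT
  -- rewrite LHS inner sums
  have hL : ∑ j ∈ Finset.Icc 1 (q/2),
      (1 / (j : ℝ)) * ∑' a : ℤ, (if (q : ℤ) ∣ (j : ℤ) * a then K (a * ℓ) else 0)
      = ∑ j ∈ Finset.Icc 1 (q/2), (1/(j:ℝ)) * T (q / Nat.gcd j q) := by
    refine Finset.sum_congr rfl fun j hj => ?_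
    rw [Finset.mem_Icc] at hj
    congr 1
    exact tsum_congr fun a => if_congr (dvd_iff_aux q j hq (by omega) a) rfl rfl
  have hident : 2 * (q : ℝ) * ∑ j ∈ Finset.Icc 1 (q/2),
      (1 / (j : ℝ)) * ∑' a : ℤ, (if (q : ℤ) ∣ (j : ℤ) * a then K (a * ℓ) else 0)
      = 2 * ∑ t ∈ q.divisors.filter (fun t => 1 < t),
          (t : ℝ) * ∑ j ∈ (Finset.Icc 1 (t/2)).filter (fun j => Nat.Coprime j t),
            (1 / (j : ℝ)) * T t := by
    rw [hL, mul_assoc, flip_identity q hq T]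
  refine ⟨hident, ?_⟩
  rw [hident]
  -- bound on |T t|
  have hTb : ∀ t : ℕ, 0 < t → |T t| ≤ 2*(h:ℝ)*(4*h/(t:ℝ)+1) := by
    intro t ht
    rw [hT]
    dsimp only
    rw [tsum_eq_aux h ℓ hℓ K hK0 (fun a => (t:ℤ) ∣ a)]
    calc |∑ a ∈ Finset.Icc (-(2*(h:ℤ))) (2*h), (if (t:ℤ) ∣ a then K (a * ℓ) else 0)|
        ≤ ∑ a ∈ Finset.Icc (-(2*(h:ℤ))) (2*h), |if (t:ℤ) ∣ a then K (a * ℓ) else 0| :=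
          Finset.abs_sum_le_sum_abs _ _
    _ ≤ ∑ a ∈ Finset.Icc (-(2*(h:ℤ))) (2*h), (if (t:ℤ) ∣ a then 2*(h:ℝ) else 0) := by
        refine Finset.sum_le_sum fun a _ => ?_
        by_cases hd : (t:ℤ) ∣ a
        · simp only [if_pos hd]; exact hKb _
        · simp [hd]
    _ = ∑ a ∈ (Finset.Icc (-(2*(h:ℤ))) (2*h)).filter (fun a => (t:ℤ) ∣ a), 2*(h:ℝ) :=
          (Finset.sum_filter _ _).symm
    _ = (((Finset.Icc (-(2*(h:ℤ))) (2*h)).filter (fun a => (t:ℤ) ∣ a)).card : ℝ) * (2*h) := by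
          rw [Finset.sum_const, nsmul_eq_mul]
    _ ≤ (4*h/(t:ℝ)+1) * (2*h) := by
          apply mul_le_mul_of_nonneg_right (card_mult_bound h t ht) (by positivity)
    _ = 2*(h:ℝ)*(4*h/(t:ℝ)+1) := by ring
  have hq1 : (1:ℝ) ≤ q := by exact_mod_cast hq
  have hlogq : (0:ℝ) ≤ Real.log q := Real.log_nonneg hq1
  -- per-divisor bound
  have hterm : ∀ t ∈ q.divisors.filter (fun t => 1 < t),
      |(t : ℝ) * ∑ j ∈ (Finset.Icc 1 (t/2)).filter (fun j => Nat.Coprime j t),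
          (1 / (j : ℝ)) * T t| ≤ (1 + Real.log q) * (2*(h:ℝ)*(4*(h:ℝ) + q)) := by
    intro t htmem
    rw [Finset.mem_filter, Nat.mem_divisors] at htmem
    obtain ⟨⟨htq, -⟩, ht1⟩ := htmem
    have ht0 : 0 < t := by omega
    have htle : t ≤ q := Nat.le_of_dvd hq htq
    have hHt : ∑ j ∈ (Finset.Icc 1 (t/2)).filter (fun j => Nat.Coprime j t), (1/(j:ℝ))
        ≤ 1 + Real.log q := by
      calc ∑ j ∈ (Finset.Icc 1 (t/2)).filter (fun j => Nat.Coprime j t), (1/(j:ℝ))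
          ≤ ∑ j ∈ Finset.Icc 1 (t/2), (1/(j:ℝ)) := by
            apply Finset.sum_le_sum_of_subset_of_nonneg (Finset.filter_subset _ _)
            intro i _ _; positivity
      _ ≤ 1 + Real.log q := harm_bound (t/2) q hq (by omega)
    have hHnn : (0:ℝ) ≤ ∑ j ∈ (Finset.Icc 1 (t/2)).filter (fun j => Nat.Coprime j t), (1/(j:ℝ)) :=
      Finset.sum_nonneg fun i _ => by positivity
    rw [← Finset.sum_mul, abs_mul, abs_mul, Nat.abs_cast, abs_of_nonneg hHnn]
    calc (t:ℝ) * ((∑ j ∈ (Finset.Icc 1 (t/2)).filter (fun j => Nat.Coprime j t), (1/(j:ℝ))) * |T t|)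
        ≤ (t:ℝ) * ((1 + Real.log q) * (2*(h:ℝ)*(4*h/(t:ℝ)+1))) := by
          apply mul_le_mul_of_nonneg_left _ (by positivity)
          apply mul_le_mul hHt (hTb t ht0) (abs_nonneg _) (by linarith)
    _ = (1 + Real.log q) * (2*(h:ℝ)*(4*(h:ℝ) + t)) := by
          have ht0' : (t:ℝ) ≠ 0 := by positivity
          field_simp
    _ ≤ (1 + Real.log q) * (2*(h:ℝ)*(4*(h:ℝ) + q)) := by
          have htq' : (t:ℝ) ≤ q := by exact_mod_cast htle
          gcongr
  -- sum it up
  have hcard : ((q.divisors.filter (fun t => 1 < t)).card : ℝ) ≤ C₁ * (q:ℝ)^(ε/2) := by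
    calc ((q.divisors.filter (fun t => 1 < t)).card : ℝ) ≤ (q.divisors.card : ℝ) := by
          exact_mod_cast Finset.card_le_card (Finset.filter_subset _ _)
    _ ≤ C₁ * (q:ℝ)^(ε/2) := hC₁ q hq
  have hlog : 1 + Real.log q ≤ (1 + 2/ε) * (q:ℝ)^(ε/2) := by
    have h1 : Real.log q ≤ (q:ℝ)^(ε/2) / (ε/2) := Real.log_le_rpow_div (by positivity) (half_pos hε)
    have h2 : (1:ℝ) ≤ (q:ℝ)^(ε/2) := Real.one_le_rpow hq1 (by positivity)
    calc 1 + Real.log q ≤ (q:ℝ)^(ε/2) + (q:ℝ)^(ε/2) / (ε/2) := by linarith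
    _ = (1 + 2/ε) * (q:ℝ)^(ε/2) := by field_simp
  have hrpos : (0:ℝ) ≤ (q:ℝ)^(ε/2) := by positivity
  have hq20 : (0:ℝ) < q := by exact_mod_cast hq
  have hεfac : (0:ℝ) ≤ 1 + 2/ε := by positivity
  calc |2 * ∑ t ∈ q.divisors.filter (fun t => 1 < t),
          (t : ℝ) * ∑ j ∈ (Finset.Icc 1 (t/2)).filter (fun j => Nat.Coprime j t),
            (1 / (j : ℝ)) * T t|
      ≤ 2 * ∑ t ∈ q.divisors.filter (fun t => 1 < t),
          |(t : ℝ) * ∑ j ∈ (Finset.Icc 1 (t/2)).filter (fun j => Nat.Coprime j t),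
            (1 / (j : ℝ)) * T t| := by
        rw [abs_mul, abs_two]
        exact mul_le_mul_of_nonneg_left (Finset.abs_sum_le_sum_abs _ _) (by norm_num)
  _ ≤ 2 * ∑ t ∈ q.divisors.filter (fun t => 1 < t),
        ((1 + Real.log q) * (2*(h:ℝ)*(4*(h:ℝ) + q))) := by
        apply mul_le_mul_of_nonneg_left (Finset.sum_le_sum hterm) (by norm_num)
  _ = 2 * ((q.divisors.filter (fun t => 1 < t)).card : ℝ)
        * ((1 + Real.log q) * (2*(h:ℝ)*(4*(h:ℝ) + q))) := by
        rw [Finset.sum_const, nsmul_eq_mul]; ring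
  _ ≤ 2 * (C₁ * (q:ℝ)^(ε/2)) * (((1 + 2/ε) * (q:ℝ)^(ε/2)) * (2*(h:ℝ)*(4*(h:ℝ) + q))) := by
        have hhq : (0:ℝ) ≤ 2*(h:ℝ)*(4*(h:ℝ) + q) := by positivity
        apply mul_le_mul
        · exact mul_le_mul_of_nonneg_left hcard (by norm_num)
        · exact mul_le_mul_of_nonneg_right hlog hhq
        · positivity
        · positivity
  _ ≤ 16 * C₁ * (1 + 2/ε) * ((q : ℝ) * h + (h : ℝ)^2) * (q : ℝ)^ε := by
        have hsplit : (q:ℝ)^ε = (q:ℝ)^(ε/2) * (q:ℝ)^(ε/2) := by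
          rw [← Real.rpow_add hq20]; norm_num
        rw [hsplit]
        have hkey : 2*(h:ℝ)*(4*(h:ℝ) + q) ≤ 8 * ((q:ℝ)*h + (h:ℝ)^2) := by nlinarith [hq20.le, (by positivity : (0:ℝ) ≤ (h:ℝ))]
        have hC₁0 : (0:ℝ) ≤ C₁ := by linarith
        nlinarith [mul_nonneg (mul_nonneg hC₁0 hεfac) (mul_nonneg hrpos hrpos),
          mul_le_mul_of_nonneg_left hkey (mul_nonneg (mul_nonneg (mul_nonneg hC₁0 hεfac) hrpos) hrpos)]
end
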